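/- In a cartesian differential category, for any f : A → B and m, n ≥ 0, the m-th derivative of the n-th derivative satisfies (f^{(n)})^{(m)}(x⃗) = Σ_{θ : [m] ≃ [n]} f^{(|θ|)}(x_{θ₍₁₎ θ₍₂₎}), where the sum ranges over partial isomorphisms θ between subsets of [m] and [n], |θ| = m + n − |dom θ|, and x_{θ₍₁₎ θ₍₂₎} is the list x₀₀, followed by x_{i θ(i)} for i in the domain of θ, then x_{i'0} for i' in [m] minus the domain, then x_{0 j'} for j' in [n] minus the image. -/

import Mathlib

universe u

open Finset

/-- Unordered partitions of `Fin n` into nonempty parts, as a `Finset`. -/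
def partitions (n : ℕ) : Finset (Finset (Finset (Fin n))) :=
  Finset.univ.filter fun P =>
    (∅ ∉ P) ∧ ∀ i : Fin n, (P.filter fun s => i ∈ s).card = 1

/-- Partial injections from `Fin m` to `Fin n` (partial isomorphisms `[m] ≃ [n]`). -/
def partialInjs (m n : ℕ) : Finset (Fin m → Option (Fin n)) :=
  Finset.univ.filter fun θ =>
    ∀ i j : Fin m, ∀ a : Fin n, θ i = some a → θ j = some a → i = j

/-- The arrangement (Notation 5) associated to a partial isomorphism `θ : [m] ≃ [n]`:
the tail of the list `x_{θ₍₁₎θ₍₂₎}`, i.e. everything after the leading entry `(0,0)`: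
matched pairs `(i, θ i)`, then unmatched rows `(i, 0)`, then unmatched columns `(0, j)`. -/
def arrangeTail (m n : ℕ) (θ : Fin m → Option (Fin n)) :
    List (Fin (m + 1) × Fin (n + 1)) :=
  ((List.finRange m).filterMap fun i => (θ i).map fun j => (i.succ, j.succ))
    ++ ((List.finRange m).filterMap fun i =>
          if θ i = none then some (i.succ, (0 : Fin (n + 1))) else none)
    ++ ((List.finRange n).filterMap fun j =>
          if ∀ i, θ i ≠ some j then some ((0 : Fin (m + 1)), j.succ) else none)

variable (k : Type u) [CommSemiring k]

/-- The data of a cartesian left-`k`-linear category. -/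
structure CDCData where
  Obj : Type u
  Hom : Obj → Obj → Type u
  homAdd : ∀ A B, AddCommMonoid (Hom A B)
  homMod : ∀ A B, @Module k (Hom A B) inferInstance (homAdd A B)
  id : ∀ A, Hom A A
  comp : ∀ {A B C}, Hom B C → Hom A B → Hom A C
  term : Obj
  toTerm : ∀ A, Hom A term
  prod : Obj → Obj → Obj
  fst : ∀ {A B}, Hom (prod A B) A
  snd : ∀ {A B}, Hom (prod A B) B
  pair : ∀ {Z A B}, Hom Z A → Hom Z B → Hom Z (prod A B)

variable {k}

instance (C : CDCData k) (A B : C.Obj) : AddCommMonoid (C.Hom A B) := C.homAdd A B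
instance (C : CDCData k) (A B : C.Obj) : Module k (C.Hom A B) := C.homMod A B

namespace CDCData

/-- `dom A n` is the `(n+1)`-fold product `A × Aⁿ`, nested on the left. -/
def dom (C : CDCData k) (A : C.Obj) : ℕ → C.Obj
  | 0 => A
  | n + 1 => C.prod (dom C A n) A

/-- Tupling of `n+1` generalized elements of `A` into `A × Aⁿ`. -/
def tupleD (C : CDCData k) {Z A : C.Obj} :
    (n : ℕ) → (Fin (n + 1) → C.Hom Z A) → C.Hom Z (C.dom A n)
  | 0, x => x 0
  | n + 1, x => C.pair (tupleD C n fun i => x i.castSucc) (x (Fin.last (n + 1)))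

/-- Tupling of a head together with a list; the head of the list lands in the
*last* slot. -/
def tupList (C : CDCData k) {Z A : C.Obj} (x0 : C.Hom Z A) :
    (L : List (C.Hom Z A)) → C.Hom Z (C.dom A L.length)
  | [] => x0
  | a :: L => C.pair (tupList C x0 L) a

/-- Zero-padding `v` into the first slot of `A × Aⁿ`. -/
def zpad (C : CDCData k) {Z A : C.Obj} : (n : ℕ) → C.Hom Z A → C.Hom Z (C.dom A n)
  | 0, v => v
  | n + 1, v => C.pair (zpad C n v) 0

/-- The `i`-th projection `A × Aⁿ → A`. -/
def projD (C : CDCData k) {A : C.Obj} : (n : ℕ) → Fin (n + 1) → C.Hom (C.dom A n) A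
  | 0, _ => C.id A
  | n + 1, i => Fin.lastCases C.snd (fun j => C.comp (projD C n j) C.fst) i

/-- The `2ⁿ`-fold product of `A`. -/
def twoPow (C : CDCData k) (A : C.Obj) : ℕ → C.Obj
  | 0 => A
  | n + 1 => C.prod (twoPow C A n) (twoPow C A n)

/-- Tupling of a family indexed by `Fin n → Bool` (characteristic functions of
subsets of `[n]`) into `A^(2ⁿ)`; the last bit is the outermost product factor. -/
def cube (C : CDCData k) {Z A : C.Obj} :
    (n : ℕ) → ((Fin n → Bool) → C.Hom Z A) → C.Hom Z (C.twoPow A n)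
  | 0, x => x fun i => i.elim0
  | n + 1, x =>
      C.pair (cube C n fun b => x (Fin.snoc b false))
        (cube C n fun b => x (Fin.snoc b true))

/-- The subset of `Fin n` with characteristic function `b`. -/
def bset {n : ℕ} (b : Fin n → Bool) : Finset (Fin n) :=
  Finset.univ.filter fun i => b i = true

end CDCData

variable (k)

/-- A (`k`-linear) cartesian differential category, presented via generalized
elements. -/
structure CDC extends CDCData k where
  id_comp : ∀ {A B} (f : Hom A B), comp (id B) f = f
  comp_id : ∀ {A B} (f : Hom A B), comp f (id A) = f
  comp_assoc : ∀ {A B C D} (h : Hom C D) (g : Hom B C) (f : Hom A B),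
    comp (comp h g) f = comp h (comp g f)
  -- left `k`-linearity: precomposition is `k`-linear
  add_comp : ∀ {A B C} (g h : Hom B C) (f : Hom A B),
    comp (g + h) f = comp g f + comp h f
  smul_comp : ∀ {A B C} (r : k) (g : Hom B C) (f : Hom A B),
    comp (r • g) f = r • comp g f
  zero_comp : ∀ {A B C} (f : Hom A B), comp (0 : Hom B C) f = (0 : Hom A C)
  -- cartesian structure
  toTerm_unique : ∀ {A} (f : Hom A term), f = toTerm A
  fst_pair : ∀ {Z A B} (f : Hom Z A) (g : Hom Z B), comp fst (pair f g) = f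
  snd_pair : ∀ {Z A B} (f : Hom Z A) (g : Hom Z B), comp snd (pair f g) = g
  pair_unique : ∀ {Z A B} (h : Hom Z (prod A B)), pair (comp fst h) (comp snd h) = h
  -- the projections are `k`-linear
  fst_comp_add : ∀ {Z A B} (x y : Hom Z (prod A B)),
    comp fst (x + y) = comp fst x + comp fst y
  fst_comp_smul : ∀ {Z A B} (r : k) (x : Hom Z (prod A B)),
    comp fst (r • x) = r • comp fst x
  snd_comp_add : ∀ {Z A B} (x y : Hom Z (prod A B)),
    comp snd (x + y) = comp snd x + comp snd y
  snd_comp_smul : ∀ {Z A B} (r : k) (x : Hom Z (prod A B)),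
    comp snd (r • x) = r • comp snd x
  -- the differential operator
  D : ∀ {A B}, Hom A B → Hom (prod A A) B
  -- (i) D is k-linear
  D_add : ∀ {A B} (f g : Hom A B), D (f + g) = D f + D g
  D_smul : ∀ {A B} (r : k) (f : Hom A B), D (r • f) = r • D f
  -- (ii) D f is k-linear in its second argument
  D_arg_add : ∀ {Z A B} (f : Hom A B) (x u v : Hom Z A),
    comp (D f) (pair x (u + v)) = comp (D f) (pair x u) + comp (D f) (pair x v)
  D_arg_smul : ∀ {Z A B} (f : Hom A B) (r : k) (x u : Hom Z A),
    comp (D f) (pair x (r • u)) = r • comp (D f) (pair x u)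
  -- (iii) D of projections
  D_fst : ∀ {A B}, D (fst (A := A) (B := B)) = comp fst snd
  D_snd : ∀ {A B}, D (snd (A := A) (B := B)) = comp snd snd
  -- (iv) D of identities
  D_id : ∀ {A}, D (id A) = snd
  -- (v) the chain rule
  D_comp : ∀ {A B C} (g : Hom B C) (f : Hom A B),
    D (comp g f) = comp (D g) (pair (comp f fst) (D f))
  -- (vi) D f is D-linear in its first argument
  D_lin : ∀ {Z A B} (f : Hom A B) (x r v : Hom Z A),
    comp (D (D f)) (pair (pair x r) (pair 0 v)) = comp (D f) (pair x v)
  -- (vii) symmetry of the second derivative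
  D_sym : ∀ {Z A B} (f : Hom A B) (x r s : Hom Z A),
    comp (D (D f)) (pair (pair x r) (pair s 0)) =
      comp (D (D f)) (pair (pair x s) (pair r 0))

variable {k}

namespace CDC

/-- The `n`-th derivative `f⁽ⁿ⁾ = (D₁)ⁿ f : A × Aⁿ → B`. -/
def fDeriv (C : CDC k) {A B : C.Obj} (f : C.Hom A B) :
    (n : ℕ) → C.Hom (C.toCDCData.dom A n) B
  | 0 => f
  | n + 1 =>
      C.comp (C.D (fDeriv C f n)) (C.pair C.fst (C.toCDCData.zpad n C.snd))

/-- The iterated differential `Dⁿ f : A^(2ⁿ) → B`. -/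
def iterD (C : CDC k) {A B : C.Obj} (f : C.Hom A B) :
    (n : ℕ) → C.Hom (C.toCDCData.twoPow A n) B
  | 0 => f
  | n + 1 => C.D (iterD C f n)

/-- `f^{(I)}` for `I ⊆ [n]` (Definition 13). -/
def fIdx (C : CDC k) {A B : C.Obj} (f : C.Hom A B) (n : ℕ) (I : Finset (Fin n)) :
    C.Hom (C.toCDCData.dom A n) B :=
  C.comp (fDeriv C f I.card)
    (C.toCDCData.tupleD I.card
      (Fin.cases (C.toCDCData.projD n 0)
        fun j => C.toCDCData.projD n (Fin.succ ((I.orderIsoOfFin rfl j : Fin n)))))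

end CDC



/-! ### Toolkit -/

attribute [reducible] CDCData.dom CDCData.twoPow

namespace FaaProof
open CDCData List

variable {k : Type u} [CommSemiring k] {C : CDC k}

section Basic

variable {Z W A B A' B' : C.Obj}

lemma pair_comp (a : C.Hom Z A) (b : C.Hom Z B) (h : C.Hom W Z) :
    C.comp (C.pair a b) h = C.pair (C.comp a h) (C.comp b h) := by
  conv_lhs => rw [← C.pair_unique (C.comp (C.pair a b) h)]
  rw [← C.comp_assoc, C.fst_pair, ← C.comp_assoc, C.snd_pair]

lemma pair_add (a c : C.Hom Z A) (b d : C.Hom Z B) :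
    C.pair (a + c) (b + d) = C.pair a b + C.pair c d := by
  conv_rhs => rw [← C.pair_unique (C.pair a b + C.pair c d)]
  rw [C.fst_comp_add, C.snd_comp_add, C.fst_pair, C.fst_pair, C.snd_pair, C.snd_pair]

lemma fst_comp_zero : C.comp C.fst (0 : C.Hom Z (C.prod A B)) = 0 := by
  have h := C.fst_comp_smul (0 : k) (0 : C.Hom Z (C.prod A B))
  rwa [zero_smul, zero_smul] at h

lemma snd_comp_zero : C.comp C.snd (0 : C.Hom Z (C.prod A B)) = 0 := by
  have h := C.snd_comp_smul (0 : k) (0 : C.Hom Z (C.prod A B))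
  rwa [zero_smul, zero_smul] at h

lemma pair_zero : C.pair (0 : C.Hom Z A) (0 : C.Hom Z B) = (0 : C.Hom Z (C.prod A B)) := by
  conv_rhs => rw [← C.pair_unique (0 : C.Hom Z (C.prod A B))]
  rw [fst_comp_zero, snd_comp_zero]

lemma D_zero : C.D (0 : C.Hom A B) = 0 := by
  have h := C.D_smul (0 : k) (0 : C.Hom A B)
  rwa [zero_smul, zero_smul] at h

lemma D_zerodir (h : C.Hom A B) (t : C.Hom Z A) :
    C.comp (C.D h) (C.pair t 0) = 0 := by
  have e := C.D_arg_smul h (0 : k) t (0 : C.Hom Z A)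
  rwa [zero_smul, zero_smul] at e

/-- `D` as an additive monoid hom. -/
def Dhom (A B : C.Obj) : C.Hom A B →+ C.Hom (C.prod A A) B where
  toFun := C.D
  map_zero' := D_zero
  map_add' := C.D_add

/-- right-composition as an additive monoid hom. -/
def compHom (h : C.Hom Z A) (B : C.Obj) : C.Hom A B →+ C.Hom Z B where
  toFun g := C.comp g h
  map_zero' := C.zero_comp h
  map_add' g g' := C.add_comp g g' h

lemma D_sum {ι : Type*} (s : Finset ι) (g : ι → C.Hom A B) :
    C.D (∑ i ∈ s, g i) = ∑ i ∈ s, C.D (g i) :=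
  map_sum (Dhom A B) g s

lemma sum_comp {ι : Type*} (s : Finset ι) (g : ι → C.Hom A B) (h : C.Hom Z A) :
    C.comp (∑ i ∈ s, g i) h = ∑ i ∈ s, C.comp (g i) h :=
  map_sum (compHom h B) g s

/-- linear (in the differential sense) morphisms -/
def Lin (h : C.Hom A B) : Prop := C.D h = C.comp h C.snd

lemma Lin.id : Lin (C.id A) := by
  rw [Lin, C.D_id, C.id_comp]

lemma Lin.fst : Lin (C.fst (A := A) (B := B)) := C.D_fst

lemma Lin.snd : Lin (C.snd (A := A) (B := B)) := C.D_snd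

lemma Lin.zero : Lin (0 : C.Hom A B) := by
  rw [Lin, D_zero, C.zero_comp]

lemma Lin.comp {g : C.Hom A B} {h : C.Hom Z A} (hg : Lin g) (hh : Lin h) :
    Lin (C.comp g h) := by
  rw [Lin, C.D_comp, hg, hh, C.comp_assoc, C.snd_pair, ← C.comp_assoc]

lemma D_pair (u : C.Hom Z A) (v : C.Hom Z B) :
    C.D (C.pair u v) = C.pair (C.D u) (C.D v) := by
  have hu : C.D u = C.comp C.fst (C.D (C.pair u v)) := by
    conv_lhs => rw [← C.fst_pair u v]
    rw [C.D_comp, C.D_fst, C.comp_assoc, C.snd_pair]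
  have hv : C.D v = C.comp C.snd (C.D (C.pair u v)) := by
    conv_lhs => rw [← C.snd_pair u v]
    rw [C.D_comp, C.D_snd, C.comp_assoc, C.snd_pair]
  rw [hu, hv, C.pair_unique]

lemma Lin.pair {u : C.Hom Z A} {v : C.Hom Z B} (hu : Lin u) (hv : Lin v) :
    Lin (C.pair u v) := by
  rw [Lin, D_pair, hu, hv, pair_comp]

/-- chain rule along a linear map -/
lemma D_comp_lin (g : C.Hom A B) {h : C.Hom Z A} (hh : Lin h) :
    C.D (C.comp g h) = C.comp (C.D g) (C.pair (C.comp h C.fst) (C.comp h C.snd)) := by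
  rw [C.D_comp, hh]

end Basic

end FaaProof

namespace FaaProof
open CDCData List

variable {k : Type u} [CommSemiring k] {C : CDC k}

section Tup

variable {Z W A B : C.Obj} {τ : Type*}

/-- tuple with base `x0` and entries `v p` for `p` in a list, head outermost. -/
def tupP (x0 : C.Hom Z A) (v : τ → C.Hom Z A) :
    (l : List τ) → C.Hom Z (C.toCDCData.dom A l.length)
  | [] => x0
  | p :: l => C.pair (tupP x0 v l) (v p)

@[simp] lemma tupP_nil (x0 : C.Hom Z A) (v : τ → C.Hom Z A) : tupP x0 v [] = x0 := rfl

@[simp] lemma tupP_cons (x0 : C.Hom Z A) (v : τ → C.Hom Z A) (p : τ) (l : List τ) :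
    tupP x0 v (p :: l) = C.pair (tupP x0 v l) (v p) := rfl

lemma tupP_comp (x0 : C.Hom Z A) (v : τ → C.Hom Z A) (l : List τ) (h : C.Hom W Z) :
    C.comp (tupP x0 v l) h = tupP (C.comp x0 h) (fun p => C.comp (v p) h) l := by
  induction l with
  | nil => rfl
  | cons p l ih => rw [tupP_cons, pair_comp, ih]; rfl

lemma tupP_congr {x0 x0' : C.Hom Z A} {v v' : τ → C.Hom Z A} {l : List τ}
    (hx : x0 = x0') (hv : ∀ p ∈ l, v p = v' p) : tupP x0 v l = tupP x0' v' l := by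
  induction l with
  | nil => exact hx
  | cons p l ih =>
      rw [tupP_cons, tupP_cons, hv p (List.mem_cons_self),
        ih fun q hq => hv q (List.mem_cons_of_mem p hq)]

lemma Lin.tupP {x0 : C.Hom Z A} {v : τ → C.Hom Z A} (hx : Lin x0) (hv : ∀ p, Lin (v p))
    (l : List τ) : Lin (tupP x0 v l) := by
  induction l with
  | nil => exact hx
  | cons p l ih => exact Lin.pair ih (hv p)

/- zpad lemmas -/

lemma zpad_comp (n : ℕ) (h : C.Hom Z A) (w : C.Hom W Z) :
    C.comp (C.toCDCData.zpad n h) w = C.toCDCData.zpad n (C.comp h w) := by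
  induction n with
  | zero => rfl
  | succ n ih => rw [zpad, zpad, pair_comp, ih, C.zero_comp]

lemma zpad_zero (n : ℕ) : C.toCDCData.zpad n (0 : C.Hom Z A) = 0 := by
  induction n with
  | zero => rfl
  | succ n ih => rw [zpad, ih, pair_zero]

lemma Lin.zpad {v : C.Hom Z A} (hv : Lin v) (n : ℕ) : Lin (C.toCDCData.zpad n v) := by
  induction n with
  | zero => exact hv
  | succ n ih => exact Lin.pair ih Lin.zero

/- projD lemmas -/

lemma projD_castSucc {A : C.Obj} (n : ℕ) (j : Fin (n + 1)) :
    C.toCDCData.projD (A := A) (n + 1) j.castSucc =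
      C.comp (C.toCDCData.projD (A := A) n j) C.fst := by
  simp [CDCData.projD]

lemma projD_last {A : C.Obj} (n : ℕ) :
    C.toCDCData.projD (n + 1) (Fin.last (n + 1)) = (C.snd (A := C.toCDCData.dom A n)) := by
  simp [CDCData.projD]

lemma projD_succ_zero {A : C.Obj} (n : ℕ) :
    C.toCDCData.projD (n + 1) (0 : Fin (n + 2)) =
      C.comp (C.toCDCData.projD n (0 : Fin (n + 1))) (C.fst (B := A)) := by
  rw [← Fin.castSucc_zero, projD_castSucc]

lemma Lin.projD {A : C.Obj} (n : ℕ) (t : Fin (n + 1)) : Lin (C.toCDCData.projD (A := A) n t) := by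
  induction n with
  | zero => exact Lin.id
  | succ n ih =>
      refine Fin.lastCases ?_ (fun j => ?_) t
      · rw [projD_last]; exact Lin.snd
      · rw [projD_castSucc]; exact (ih j).comp Lin.fst

lemma projD_comp_zero {A : C.Obj} (n : ℕ) (t : Fin (n + 1)) :
    C.comp (C.toCDCData.projD n t) (0 : C.Hom Z (C.toCDCData.dom A n)) = 0 := by
  induction n with
  | zero =>
      show C.comp (C.id A) 0 = 0
      rw [C.id_comp]
  | succ n ih =>
      refine Fin.lastCases ?_ (fun j => ?_) t
      · rw [projD_last]; exact snd_comp_zero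
      · rw [projD_castSucc, C.comp_assoc, fst_comp_zero, ih]

lemma projD_zpad_zero {A : C.Obj} (n : ℕ) (v : C.Hom Z A) :
    C.comp (C.toCDCData.projD n 0) (C.toCDCData.zpad n v) = v := by
  induction n with
  | zero => exact C.id_comp v
  | succ n ih => rw [projD_succ_zero, zpad, C.comp_assoc, C.fst_pair, ih]

lemma projD_zpad_succ {A : C.Obj} (n : ℕ) (u : Fin n) (v : C.Hom Z A) :
    C.comp (C.toCDCData.projD n u.succ) (C.toCDCData.zpad n v) = 0 := by
  induction n with
  | zero => exact u.elim0
  | succ n ih =>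
      refine Fin.lastCases ?_ (fun w => ?_) u
      · rw [Fin.succ_last, projD_last, zpad, C.snd_pair]
      · rw [Fin.succ_castSucc, projD_castSucc, zpad, C.comp_assoc, C.fst_pair, ih]

/- tupleD lemmas -/

lemma projD_tupleD {A : C.Obj} (n : ℕ) (y : Fin (n + 1) → C.Hom Z A) (t : Fin (n + 1)) :
    C.comp (C.toCDCData.projD n t) (C.toCDCData.tupleD n y) = y t := by
  induction n with
  | zero =>
      have ht : t = 0 := Subsingleton.elim (α := Fin 1) t 0
      subst ht
      exact C.id_comp (y 0)
  | succ n ih =>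
      refine Fin.lastCases ?_ (fun j => ?_) t
      · rw [projD_last, tupleD, C.snd_pair]
      · rw [projD_castSucc, tupleD, C.comp_assoc, C.fst_pair, ih]

lemma tupleD_comp {A : C.Obj} (n : ℕ) (y : Fin (n + 1) → C.Hom Z A) (h : C.Hom W Z) :
    C.comp (C.toCDCData.tupleD n y) h = C.toCDCData.tupleD n (fun t => C.comp (y t) h) := by
  induction n with
  | zero => rfl
  | succ n ih => rw [tupleD, tupleD, pair_comp, ih]

lemma tupleD_ext {A : C.Obj} (n : ℕ) (h : C.Hom Z (C.toCDCData.dom A n)) :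
    C.toCDCData.tupleD n (fun t => C.comp (C.toCDCData.projD n t) h) = h := by
  induction n with
  | zero => exact C.id_comp h
  | succ n ih =>
      rw [tupleD]
      have h1 : ∀ j : Fin (n + 1),
          C.comp (C.toCDCData.projD (n + 1) j.castSucc) h =
            C.comp (C.toCDCData.projD n j) (C.comp C.fst h) := by
        intro j; rw [projD_castSucc, C.comp_assoc]
      calc C.pair (C.toCDCData.tupleD n fun j =>
              C.comp (C.toCDCData.projD (n + 1) j.castSucc) h)
            (C.comp (C.toCDCData.projD (n + 1) (Fin.last (n + 1))) h)
          = C.pair (C.comp C.fst h) (C.comp C.snd h) := by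
            rw [projD_last]
            congr 1
            rw [funext h1] at *
            exact ih (C.comp C.fst h)
        _ = h := C.pair_unique h

lemma Lin.tupleD {A : C.Obj} (n : ℕ) {y : Fin (n + 1) → C.Hom Z A} (hy : ∀ t, Lin (y t)) :
    Lin (C.toCDCData.tupleD n y) := by
  induction n with
  | zero => exact hy 0
  | succ n ih => exact Lin.pair (ih fun t => hy t.castSucc) (hy _)

lemma pair_fst_snd {A B : C.Obj} : C.pair C.fst C.snd = C.id (C.prod A B) := by
  conv_rhs => rw [← C.pair_unique (C.id (C.prod A B))]
  rw [C.comp_id, C.comp_id]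

lemma fDeriv_pair {A B : C.Obj} (f : C.Hom A B) (K : ℕ)
    (t : C.Hom Z (C.toCDCData.dom A K)) (a : C.Hom Z A) :
    C.comp (C.fDeriv f (K + 1)) (C.pair t a) =
      C.comp (C.D (C.fDeriv f K)) (C.pair t (C.toCDCData.zpad K a)) := by
  rw [CDC.fDeriv, C.comp_assoc, pair_comp, C.fst_pair, zpad_comp, C.snd_pair]

/- HEq helpers -/

lemma heq_pair {A : C.Obj} {K K' : ℕ} (h : K = K') {t : C.Hom Z (C.toCDCData.dom A K)}
    {t' : C.Hom Z (C.toCDCData.dom A K')} (ht : HEq t t') (a : C.Hom Z A) :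
    HEq (C.pair t a) (C.pair t' a) := by
  subst h
  rw [eq_of_heq ht]

lemma cast_phi {A B : C.Obj} (f : C.Hom A B) {K K' : ℕ} (h : K = K')
    {t : C.Hom Z (C.toCDCData.dom A K)} {t' : C.Hom Z (C.toCDCData.dom A K')}
    (ht : HEq t t') : C.comp (C.fDeriv f K) t = C.comp (C.fDeriv f K') t' := by
  subst h
  rw [eq_of_heq ht]

lemma tupP_map_heq {σ : Type*} (x0 : C.Hom Z A) (v : τ → C.Hom Z A) (g : σ → τ) (l : List σ) :
    HEq (tupP x0 v (l.map g)) (tupP x0 (fun p => v (g p)) l) := by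
  induction l with
  | nil => rfl
  | cons p l ih => exact heq_pair (by simp) ih (v (g p))

lemma tupList_eq_tupP (x0 : C.Hom Z A) (L : List (C.Hom Z A)) :
    C.toCDCData.tupList x0 L = tupP x0 (fun h => h) L := by
  induction L with
  | nil => rfl
  | cons a L ih => rw [tupList, ih]; rfl

/-- conversion of the statement's `tupList ∘ map` composites into `tupP` composites. -/
lemma phi_map {A B : C.Obj} (f : C.Hom A B) (x0 : C.Hom Z A) (v : τ → C.Hom Z A) (l : List τ) :
    C.comp (C.fDeriv f (l.map v).length) (C.toCDCData.tupList x0 (l.map v)) =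
      C.comp (C.fDeriv f l.length) (tupP x0 v l) := by
  rw [tupList_eq_tupP]
  exact cast_phi f (by simp) (tupP_map_heq x0 (fun h => h) v l)

end Tup

end FaaProof

namespace FaaProof
open CDCData List

variable {k : Type u} [CommSemiring k] {C : CDC k}

section Swap

variable {A B : C.Obj}

/-- the morphism swapping the two outermost slots of `dom A (K+2)` -/
def swapT (K : ℕ) : C.Hom (C.toCDCData.dom A (K + 2)) (C.toCDCData.dom A (K + 2)) :=
  C.pair (C.pair (C.comp C.fst C.fst) C.snd) (C.comp C.snd C.fst)

lemma Lin.swapT (K : ℕ) : Lin (swapT (C := C) (A := A) K) :=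
  Lin.pair (Lin.pair (Lin.fst.comp Lin.fst) Lin.snd) (Lin.snd.comp Lin.fst)

lemma zpad_succ (n : ℕ) {Z : C.Obj} (v : C.Hom Z A) :
    C.toCDCData.zpad (n + 1) v = C.pair (C.toCDCData.zpad n v) 0 := rfl

lemma fDeriv_succ (f : C.Hom A B) (n : ℕ) :
    C.fDeriv f (n + 1) =
      C.comp (C.D (C.fDeriv f n)) (C.pair C.fst (C.toCDCData.zpad n C.snd)) := rfl

lemma lin_lam (n : ℕ) :
    Lin (C.pair (C.fst (A := C.toCDCData.dom A n)) (C.toCDCData.zpad n (C.snd (A := C.toCDCData.dom A n) (B := A)))) :=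
  Lin.pair Lin.fst (Lin.snd.zpad n)

/-- `f⁽ᴷ⁺²⁾` expressed via the second derivative of `f⁽ᴷ⁾`. -/
lemma fDeriv_two (f : C.Hom A B) (K : ℕ) :
    C.fDeriv f (K + 2) =
      C.comp (C.D (C.D (C.fDeriv f K)))
        (C.pair
          (C.pair (C.comp C.fst C.fst) (C.toCDCData.zpad K (C.comp C.snd C.fst)))
          (C.pair (C.toCDCData.zpad K C.snd) 0)) := by
  rw [fDeriv_succ f (K + 1), fDeriv_succ f K, D_comp_lin _ (lin_lam K), C.comp_assoc]
  congr 1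
  simp only [pair_comp, CDC.comp_assoc, CDC.fst_pair, CDC.snd_pair, zpad_comp, zpad_succ,
    zpad_zero]

/-- symmetry of the two outermost derivative slots. -/
lemma swap2 (f : C.Hom A B) (K : ℕ) :
    C.comp (C.fDeriv f (K + 2)) (swapT K) = C.fDeriv f (K + 2) := by
  conv_lhs => rw [fDeriv_two, C.comp_assoc]
  conv_rhs => rw [fDeriv_two]
  simp only [swapT, pair_comp, CDC.comp_assoc, CDC.fst_pair, CDC.snd_pair, zpad_comp,
    CDC.zero_comp]
  exact C.D_sym (C.fDeriv f K) (C.comp C.fst C.fst) (C.toCDCData.zpad K C.snd)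
    (C.toCDCData.zpad K (C.comp C.snd C.fst))

lemma swapT_pair {Z : C.Obj} (K : ℕ) (t : C.Hom Z (C.toCDCData.dom A K))
    (a b : C.Hom Z A) :
    C.comp (swapT K) (C.pair (C.pair t a) b) = C.pair (C.pair t b) a := by
  simp only [swapT, pair_comp, CDC.comp_assoc, CDC.fst_pair, CDC.snd_pair]

/-- swapping the two outermost arguments of `f⁽ᴷ⁺²⁾`, applied form. -/
lemma swap2_apply (f : C.Hom A B) (K : ℕ) {Z : C.Obj} (t : C.Hom Z (C.toCDCData.dom A K))
    (a b : C.Hom Z A) :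
    C.comp (C.fDeriv f (K + 2)) (C.pair (C.pair t a) b) =
      C.comp (C.fDeriv f (K + 2)) (C.pair (C.pair t b) a) := by
  conv_lhs => rw [← swap2 f K, C.comp_assoc, swapT_pair]

end Swap

section TotM

variable {A B : C.Obj}

/-- the "extend by the 0-component of the direction" map -/
def kapD (A : C.Obj) (N : ℕ) :
    C.Hom (C.prod (C.toCDCData.dom A N) (C.toCDCData.dom A N)) (C.toCDCData.dom A (N + 1)) :=
  C.pair C.fst (C.comp (C.toCDCData.projD N 0) C.snd)

/-- replace slot `s.succ` of the point by the corresponding slot of the direction -/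
def replD (A : C.Obj) (N : ℕ) (s : Fin N) :
    C.Hom (C.prod (C.toCDCData.dom A N) (C.toCDCData.dom A N)) (C.toCDCData.dom A N) :=
  C.toCDCData.tupleD N (fun t =>
    if t = s.succ then C.comp (C.toCDCData.projD N t) C.snd
    else C.comp (C.toCDCData.projD N t) C.fst)

lemma Lin.kapD (N : ℕ) : Lin (kapD (C := C) A N) :=
  Lin.pair Lin.fst ((Lin.projD N 0).comp Lin.snd)

lemma Lin.replD (N : ℕ) (s : Fin N) : Lin (replD (C := C) A N s) := by
  refine Lin.tupleD N fun t => ?_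
  split
  · exact (Lin.projD N t).comp Lin.snd
  · exact (Lin.projD N t).comp Lin.fst

lemma replD_last (N : ℕ) :
    replD (C := C) A (N + 1) (Fin.last N) =
      C.pair (C.comp C.fst C.fst) (C.comp C.snd C.snd) := by
  rw [replD, tupleD]
  congr 1
  · have he : ∀ t : Fin (N + 1),
        (if (t.castSucc : Fin (N + 2)) = (Fin.last N).succ
          then C.comp (C.toCDCData.projD (A := A) (N + 1) t.castSucc) C.snd
          else C.comp (C.toCDCData.projD (A := A) (N + 1) t.castSucc) C.fst) =
        C.comp (C.toCDCData.projD (A := A) N t) (C.comp C.fst C.fst) := by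
      intro t
      rw [if_neg (by rw [Fin.succ_last]; exact Fin.ne_of_lt (Fin.castSucc_lt_last t)),
        projD_castSucc, C.comp_assoc]
    rw [funext he]
    exact tupleD_ext N _
  · rw [if_pos (Fin.succ_last N).symm, projD_last]

lemma replD_castSucc (N : ℕ) (s : Fin N) :
    replD (C := C) A (N + 1) s.castSucc =
      C.pair
        (C.comp (replD A N s) (C.pair (C.comp C.fst C.fst) (C.comp C.fst C.snd)))
        (C.comp C.snd C.fst) := by
  rw [replD, replD, tupleD, tupleD_comp]
  congr 1
  · congr 1
    funext t
    rw [apply_ite (fun g => C.comp g (C.pair (C.comp C.fst C.fst) (C.comp C.fst C.snd)))]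
    have hiff : ((t.castSucc : Fin (N + 2)) = s.castSucc.succ) ↔ t = s.succ := by
      rw [Fin.succ_castSucc, Fin.castSucc_inj]
    by_cases ht : t = s.succ
    · rw [if_pos (hiff.mpr ht), if_pos ht, projD_castSucc, C.comp_assoc, C.comp_assoc,
        C.snd_pair]
    · rw [if_neg (fun hc => ht (hiff.mp hc)), if_neg ht, projD_castSucc, C.comp_assoc,
        C.comp_assoc, C.fst_pair]
  · rw [if_neg (by
        rw [Fin.succ_castSucc]
        exact (Fin.ne_of_lt (Fin.castSucc_lt_last s.succ)).symm),
      projD_last]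

/-- Morphism-level total/partial derivative decomposition of `D (f⁽ᴺ⁾)`. -/
theorem totm (f : C.Hom A B) (N : ℕ) :
    C.D (C.fDeriv f N) =
      C.comp (C.fDeriv f (N + 1)) (kapD A N) +
        ∑ s : Fin N, C.comp (C.fDeriv f N) (replD A N s) := by
  induction N with
  | zero =>
      have h0 : kapD (C := C) A 0 = C.pair C.fst C.snd := by
        rw [kapD]
        congr 1
        exact C.id_comp C.snd
      have h1 : C.fDeriv f 1 = C.D f := by
        rw [fDeriv_succ]
        show C.comp (C.D (C.fDeriv f 0)) (C.pair C.fst C.snd) = _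
        rw [pair_fst_snd, C.comp_id]
        rfl
      rw [h0, h1, pair_fst_snd, C.comp_id, show C.fDeriv f 0 = f from rfl]
      simp
  | succ N ih =>
      have hD1 : C.D (C.fDeriv f (N + 1)) =
          C.comp (C.D (C.D (C.fDeriv f N)))
            (C.pair
              (C.pair (C.comp C.fst C.fst) (C.toCDCData.zpad N (C.comp C.snd C.fst)))
              (C.pair (C.comp C.fst C.snd) (C.toCDCData.zpad N (C.comp C.snd C.snd)))) := by
        rw [fDeriv_succ, D_comp_lin _ (lin_lam N)]
        congr 1
        simp only [pair_comp, CDC.comp_assoc, CDC.fst_pair, CDC.snd_pair, zpad_comp]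
      have hsplit : C.pair (C.comp C.fst C.snd)
            (C.toCDCData.zpad N (C.comp C.snd C.snd)) =
          C.pair (C.comp C.fst C.snd)
              (0 : C.Hom (C.prod (C.toCDCData.dom A (N + 1)) (C.toCDCData.dom A (N + 1)))
                (C.toCDCData.dom A N)) +
            C.pair 0 (C.toCDCData.zpad N (C.comp C.snd C.snd)) := by
        rw [← pair_add, add_zero, zero_add]
      have hA : C.comp (C.D (C.D (C.fDeriv f N)))
          (C.pair (C.pair (C.comp C.fst C.fst) (C.toCDCData.zpad N (C.comp C.snd C.fst)))
            (C.pair 0 (C.toCDCData.zpad N (C.comp C.snd C.snd)))) =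
          C.comp (C.fDeriv f (N + 1)) (replD A (N + 1) (Fin.last N)) := by
        conv_rhs => rw [replD_last, fDeriv_succ, C.comp_assoc, pair_comp, C.fst_pair,
          zpad_comp, C.snd_pair]
        exact C.D_lin (C.fDeriv f N) _ _ _
      have star : C.D (C.D (C.fDeriv f N)) =
          C.comp (C.D (C.fDeriv f (N + 1)))
              (C.pair (C.comp (kapD A N) C.fst) (C.comp (kapD A N) C.snd)) +
            ∑ s : Fin N, C.comp (C.D (C.fDeriv f N))
              (C.pair (C.comp (replD A N s) C.fst) (C.comp (replD A N s) C.snd)) := by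
        conv_lhs => rw [ih]
        rw [C.D_add, D_sum]
        congr 1
        · exact D_comp_lin _ (Lin.kapD N)
        · exact Finset.sum_congr rfl fun s _ => D_comp_lin _ (Lin.replD N s)
      have hk2 : ∀ w : C.Hom (C.prod (C.toCDCData.dom A (N + 1)) (C.toCDCData.dom A (N + 1))) A,
          C.comp (kapD A N) (C.pair (C.toCDCData.zpad N w) 0) =
            C.toCDCData.zpad (N + 1) w := by
        intro w
        rw [kapD, pair_comp, C.fst_pair, C.comp_assoc, C.snd_pair, projD_comp_zero,
          zpad_succ]
      have hr2 : ∀ (w : C.Hom (C.prod (C.toCDCData.dom A (N + 1)) (C.toCDCData.dom A (N + 1))) A)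
          (s : Fin N),
          C.comp (replD A N s) (C.pair (C.toCDCData.zpad N w) 0) =
            C.toCDCData.zpad N w := by
        intro w s
        rw [replD, tupleD_comp]
        have he : ∀ t : Fin (N + 1),
            C.comp (if t = s.succ then C.comp (C.toCDCData.projD (A := A) N t) C.snd
                else C.comp (C.toCDCData.projD (A := A) N t) C.fst)
              (C.pair (C.toCDCData.zpad N w) 0) =
            C.comp (C.toCDCData.projD (A := A) N t) (C.toCDCData.zpad N w) := by
          intro t
          by_cases ht : t = s.succ
          · rw [if_pos ht, C.comp_assoc, C.snd_pair, projD_comp_zero, ht, projD_zpad_succ]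
          · rw [if_neg ht, C.comp_assoc, C.fst_pair]
        rw [funext he, tupleD_ext]
      have hP1 : C.comp
          (C.comp (C.D (C.fDeriv f (N + 1)))
            (C.pair (C.comp (kapD A N) C.fst) (C.comp (kapD A N) C.snd)))
          (C.pair (C.pair (C.comp C.fst C.fst) (C.comp C.fst C.snd))
            (C.pair (C.toCDCData.zpad N (C.comp C.snd C.fst)) 0)) =
          C.comp (C.fDeriv f (N + 1 + 1)) (kapD A (N + 1)) := by
        rw [C.comp_assoc, pair_comp, C.comp_assoc, C.fst_pair, C.comp_assoc, C.snd_pair,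
          hk2, kapD, pair_comp, C.fst_pair, C.comp_assoc, C.snd_pair]
        rw [← fDeriv_pair, swap2_apply]
        congr 1
        rw [kapD]
        congr 1
        · have hp : C.pair (C.comp C.fst C.fst) (C.comp C.snd C.fst) =
              (C.fst (A := C.toCDCData.dom A (N + 1)) (B := C.toCDCData.dom A (N + 1))) := by
            rw [← pair_comp, pair_fst_snd, C.id_comp]
          exact hp
        · rw [projD_succ_zero, C.comp_assoc]
      have hPs : ∀ s : Fin N, C.comp
          (C.comp (C.D (C.fDeriv f N))
            (C.pair (C.comp (replD A N s) C.fst) (C.comp (replD A N s) C.snd)))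
          (C.pair (C.pair (C.comp C.fst C.fst) (C.comp C.fst C.snd))
            (C.pair (C.toCDCData.zpad N (C.comp C.snd C.fst)) 0)) =
          C.comp (C.fDeriv f (N + 1)) (replD A (N + 1) s.castSucc) := by
        intro s
        rw [C.comp_assoc, pair_comp, C.comp_assoc, C.fst_pair, C.comp_assoc, C.snd_pair,
          hr2, ← fDeriv_pair, replD_castSucc]
      rw [hD1, hsplit, C.D_arg_add, hA]
      rw [show C.comp (C.D (C.D (C.fDeriv f N)))
            (C.pair (C.pair (C.comp C.fst C.fst) (C.toCDCData.zpad N (C.comp C.snd C.fst)))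
              (C.pair (C.comp C.fst C.snd) 0)) =
          C.comp (C.D (C.D (C.fDeriv f N)))
            (C.pair (C.pair (C.comp C.fst C.fst) (C.comp C.fst C.snd))
              (C.pair (C.toCDCData.zpad N (C.comp C.snd C.fst)) 0)) from
        C.D_sym (C.fDeriv f N) _ _ _]
      rw [star, C.add_comp, sum_comp, hP1]
      rw [Finset.sum_congr rfl fun s _ => hPs s]
      rw [Fin.sum_univ_castSucc (n := N)
        (f := fun s => C.comp (C.fDeriv f (N + 1)) (replD A (N + 1) s))]
      abel

end TotM

end FaaProof

namespace FaaProof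
open CDCData List

variable {k : Type u} [CommSemiring k] {C : CDC k}

section Master

variable {A B Z : C.Obj} {τ : Type*}

lemma dstar (f : C.Hom A B) (N : ℕ) :
    C.D (C.D (C.fDeriv f N)) =
      C.comp (C.D (C.fDeriv f (N + 1)))
          (C.pair (C.comp (kapD A N) C.fst) (C.comp (kapD A N) C.snd)) +
        ∑ s : Fin N, C.comp (C.D (C.fDeriv f N))
          (C.pair (C.comp (replD A N s) C.fst) (C.comp (replD A N s) C.snd)) := by
  conv_lhs => rw [totm f N]
  rw [C.D_add, D_sum]
  congr 1
  · exact D_comp_lin _ (Lin.kapD N)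
  · exact Finset.sum_congr rfl fun s _ => D_comp_lin _ (Lin.replD N s)

lemma kap_pair (N : ℕ) (P Q : C.Hom Z (C.toCDCData.dom A N)) :
    C.comp (kapD A N) (C.pair P Q) =
      C.pair P (C.comp (C.toCDCData.projD N 0) Q) := by
  rw [kapD, pair_comp, C.fst_pair, C.comp_assoc, C.snd_pair]

lemma kap_zpad (N : ℕ) (w : C.Hom Z A) :
    C.comp (kapD A N) (C.pair (C.toCDCData.zpad N w) 0) =
      C.toCDCData.zpad (N + 1) w := by
  rw [kapD, pair_comp, C.fst_pair, C.comp_assoc, C.snd_pair, projD_comp_zero, zpad_succ]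

lemma replD_zpad (N : ℕ) (s : Fin N) (w : C.Hom Z A) :
    C.comp (replD A N s) (C.pair (C.toCDCData.zpad N w) 0) =
      C.toCDCData.zpad N w := by
  rw [replD, tupleD_comp]
  have he : ∀ t : Fin (N + 1),
      C.comp (if t = s.succ then C.comp (C.toCDCData.projD (A := A) N t) C.snd
          else C.comp (C.toCDCData.projD (A := A) N t) C.fst)
        (C.pair (C.toCDCData.zpad N w) 0) =
      C.comp (C.toCDCData.projD (A := A) N t) (C.toCDCData.zpad N w) := by
    intro t
    by_cases ht : t = s.succ
    · rw [if_pos ht, C.comp_assoc, C.snd_pair, projD_comp_zero, ht, projD_zpad_succ]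
    · rw [if_neg ht, C.comp_assoc, C.fst_pair]
  rw [funext he, tupleD_ext]

lemma projD_zero_tupP (x0 : C.Hom Z A) (v : τ → C.Hom Z A) (l : List τ) :
    C.comp (C.toCDCData.projD l.length 0) (tupP x0 v l) = x0 := by
  induction l with
  | nil => exact C.id_comp x0
  | cons p l ih =>
      simp only [List.length_cons]
      rw [tupP_cons, projD_succ_zero, C.comp_assoc, C.fst_pair, ih]

/-- the tuples obtained by replacing one slot's value by the `w`-value. -/
def replTups (x0 : C.Hom Z A) (v w : τ → C.Hom Z A) :
    (l : List τ) → List (C.Hom Z (C.toCDCData.dom A l.length))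
  | [] => []
  | p :: l =>
      C.pair (tupP x0 v l) (w p) :: (replTups x0 v w l).map (fun T => C.pair T (v p))

lemma repl_corr {M : Type v} [AddCommMonoid M] (x0 d0 : C.Hom Z A) (v w : τ → C.Hom Z A)
    (l : List τ) :
    ∀ G : C.Hom Z (C.toCDCData.dom A l.length) → M,
      (∑ s : Fin l.length,
        G (C.comp (replD A l.length s) (C.pair (tupP x0 v l) (tupP d0 w l)))) =
      ((replTups x0 v w l).map G).sum := by
  induction l with
  | nil => intro G; simp [replTups]
  | cons p l ih =>
      intro G
      simp only [List.length_cons] at G ⊢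
      rw [Fin.sum_univ_castSucc]
      have hlast : C.comp (replD A (l.length + 1) (Fin.last l.length))
          (C.pair (tupP x0 v (p :: l)) (tupP d0 w (p :: l))) =
          C.pair (tupP x0 v l) (w p) := by
        rw [replD_last, tupP_cons, tupP_cons]
        simp only [pair_comp, CDC.comp_assoc, CDC.fst_pair, CDC.snd_pair]
      have hcs : ∀ s : Fin l.length,
          C.comp (replD A (l.length + 1) s.castSucc)
            (C.pair (tupP x0 v (p :: l)) (tupP d0 w (p :: l))) =
          C.pair (C.comp (replD A l.length s) (C.pair (tupP x0 v l) (tupP d0 w l)))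
            (v p) := by
        intro s
        rw [replD_castSucc, tupP_cons, tupP_cons]
        simp only [pair_comp, CDC.comp_assoc, CDC.fst_pair, CDC.snd_pair]
      rw [hlast, Finset.sum_congr rfl fun s _ => congrArg G (hcs s),
        ih (fun T => G (C.pair T (v p)))]
      rw [replTups, List.map_cons, List.sum_cons, List.map_map]
      rw [show (G ∘ fun T => C.pair T (v p)) = (fun T => G (C.pair T (v p))) from rfl]
      exact add_comm _ _

/-- The key element-level expansion of a directional derivative of `f⁽ᴺ⁾`. -/
theorem master (f : C.Hom A B) (x0 d0 : C.Hom Z A) (v w : τ → C.Hom Z A) (l : List τ) :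
    C.comp (C.D (C.fDeriv f l.length)) (C.pair (tupP x0 v l) (tupP d0 w l)) =
      C.comp (C.fDeriv f (l.length + 1)) (C.pair (tupP x0 v l) d0) +
        ((replTups x0 v w l).map (fun T => C.comp (C.fDeriv f l.length) T)).sum := by
  induction l with
  | nil =>
      simp only [List.length_nil]
      rw [show C.fDeriv f 1 = C.comp (C.D (C.fDeriv f 0)) (C.pair C.fst C.snd) from rfl,
        pair_fst_snd, C.comp_id]
      simp [replTups]
  | cons p l ih =>
      simp only [List.length_cons]
      rw [tupP_cons, tupP_cons]
      have hsplit : C.pair (tupP d0 w l) (w p) =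
          C.pair (tupP d0 w l) (0 : C.Hom Z A) + C.pair 0 (w p) := by
        rw [← pair_add, add_zero, zero_add]
      rw [hsplit, C.D_arg_add]
      have hT2 : C.comp (C.D (C.fDeriv f (l.length + 1)))
          (C.pair (C.pair (tupP x0 v l) (v p)) (C.pair 0 (w p))) =
          C.comp (C.fDeriv f (l.length + 1)) (C.pair (tupP x0 v l) (w p)) := by
        rw [fDeriv_succ, D_comp_lin _ (lin_lam _)]
        simp only [pair_comp, CDC.comp_assoc, CDC.fst_pair, CDC.snd_pair, zpad_comp,
          zpad_zero]
        rw [C.D_lin]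
      have hT1 : C.comp (C.D (C.fDeriv f (l.length + 1)))
          (C.pair (C.pair (tupP x0 v l) (v p)) (C.pair (tupP d0 w l) 0)) =
          C.comp (C.fDeriv f (l.length + 1 + 1))
              (C.pair (C.pair (tupP x0 v l) (v p)) d0) +
            ∑ s : Fin l.length,
              C.comp (C.fDeriv f (l.length + 1))
                (C.pair (C.comp (replD A l.length s)
                  (C.pair (tupP x0 v l) (tupP d0 w l))) (v p)) := by
        rw [fDeriv_succ, D_comp_lin _ (lin_lam _)]
        simp only [pair_comp, CDC.comp_assoc, CDC.fst_pair, CDC.snd_pair, zpad_comp,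
          zpad_zero]
        rw [show C.comp (C.D (C.D (C.fDeriv f l.length)))
              (C.pair (C.pair (tupP x0 v l) (C.toCDCData.zpad l.length (v p)))
                (C.pair (tupP d0 w l) 0)) =
            C.comp (C.D (C.D (C.fDeriv f l.length)))
              (C.pair (C.pair (tupP x0 v l) (tupP d0 w l))
                (C.pair (C.toCDCData.zpad l.length (v p)) 0)) from
          C.D_sym (C.fDeriv f l.length) _ _ _]
        rw [dstar f l.length, C.add_comp, sum_comp]
        congr 1
        · rw [C.comp_assoc, pair_comp, C.comp_assoc, C.fst_pair, C.comp_assoc, C.snd_pair,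
            kap_pair, projD_zero_tupP, kap_zpad, ← fDeriv_pair, swap2_apply]
        · refine Finset.sum_congr rfl fun s _ => ?_
          rw [C.comp_assoc, pair_comp, C.comp_assoc, C.fst_pair, C.comp_assoc, C.snd_pair,
            replD_zpad, ← fDeriv_pair]
      rw [hT1, hT2]
      rw [repl_corr x0 d0 v w l
        (fun T => C.comp (C.fDeriv f (l.length + 1)) (C.pair T (v p)))]
      rw [replTups, List.map_cons, List.sum_cons, List.map_map]
      rw [show ((fun T => C.comp (C.fDeriv f (l.length + 1)) T) ∘ fun T => C.pair T (v p))
          = (fun T => C.comp (C.fDeriv f (l.length + 1)) (C.pair T (v p))) from rfl]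
      abel

end Master

section Perm

variable {A B Z : C.Obj} {τ : Type*}

theorem perm_ex {A : C.Obj} {l l' : List τ} (h : l.Perm l') :
    ∃ P : C.Hom (C.toCDCData.dom A l.length) (C.toCDCData.dom A l'.length),
      (∀ {B : C.Obj} (f : C.Hom A B),
        C.comp (C.fDeriv f l'.length) P = C.fDeriv f l.length) ∧
      (∀ {Z : C.Obj} (u : C.Hom Z A),
        C.comp P (C.toCDCData.zpad l.length u) = C.toCDCData.zpad l'.length u) ∧
      (∀ {Z : C.Obj} (x0 : C.Hom Z A) (v : τ → C.Hom Z A),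
        C.comp P (tupP x0 v l) = tupP x0 v l') ∧
      Lin P := by
  induction h with
  | nil =>
      exact ⟨C.id A, fun f => C.comp_id _, fun u => C.id_comp _, fun x0 v => C.id_comp _,
        Lin.id⟩
  | @cons x l₁ l₂ h ih =>
      obtain ⟨P, h1, h2, h3, hP⟩ := ih
      refine ⟨C.pair (C.comp P C.fst) C.snd, fun f => ?_, fun u => ?_, fun x0 v => ?_, ?_⟩
      · simp only [List.length_cons]
        conv_rhs => rw [fDeriv_succ]
        rw [← h1 f, D_comp_lin _ hP]
        conv_lhs => rw [fDeriv_succ]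
        simp only [pair_comp, CDC.comp_assoc, CDC.fst_pair, CDC.snd_pair, zpad_comp]
        rw [h2]
      · simp only [List.length_cons]
        rw [zpad_succ, zpad_succ, pair_comp, C.comp_assoc, C.fst_pair, C.snd_pair, h2]
      · simp only [List.length_cons]
        rw [tupP_cons, tupP_cons, pair_comp, C.comp_assoc, C.fst_pair, C.snd_pair, h3]
      · exact Lin.pair (hP.comp Lin.fst) Lin.snd
  | swap x y t =>
      refine ⟨swapT t.length, fun f => swap2 f t.length, fun u => ?_, fun x0 v => ?_,
        Lin.swapT t.length⟩
      · simp only [List.length_cons]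
        rw [zpad_succ, zpad_succ, swapT_pair]
      · simp only [List.length_cons]
        rw [tupP_cons, tupP_cons, tupP_cons, tupP_cons, swapT_pair]
  | trans h₁ h₂ ih₁ ih₂ =>
      obtain ⟨P₁, h11, h12, h13, hP₁⟩ := ih₁
      obtain ⟨P₂, h21, h22, h23, hP₂⟩ := ih₂
      refine ⟨C.comp P₂ P₁, fun f => ?_, fun u => ?_, fun x0 v => ?_, hP₂.comp hP₁⟩
      · rw [← C.comp_assoc, h21 f, h11 f]
      · rw [C.comp_assoc, h12, h22]
      · rw [C.comp_assoc, h13, h23]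

theorem perm_phi (f : C.Hom A B) (x0 : C.Hom Z A) (v : τ → C.Hom Z A) {l l' : List τ}
    (h : l.Perm l') :
    C.comp (C.fDeriv f l.length) (tupP x0 v l) =
      C.comp (C.fDeriv f l'.length) (tupP x0 v l') := by
  obtain ⟨P, h1, h2, h3, hP⟩ := perm_ex (A := A) h
  rw [← h1 f, C.comp_assoc, h3]

theorem zero_phi [DecidableEq τ] (f : C.Hom A B) (x0 : C.Hom Z A) (v : τ → C.Hom Z A)
    {l : List τ} {p : τ} (hp : p ∈ l) (hv : v p = 0) :
    C.comp (C.fDeriv f l.length) (tupP x0 v l) = 0 := by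
  rw [perm_phi f x0 v (List.perm_cons_erase hp)]
  simp only [List.length_cons]
  rw [tupP_cons, hv, fDeriv_pair, zpad_zero, D_zerodir]

end Perm

end FaaProof

namespace FaaProof
open CDCData List

variable {k : Type u} [CommSemiring k] {C : CDC k}

section ListLemmas

variable {A B Z : C.Obj} {τ : Type*}

lemma replTups_nodup [DecidableEq τ] (x0 : C.Hom Z A) (v w : τ → C.Hom Z A) (l : List τ)
    (hnd : l.Nodup) :
    replTups x0 v w l =
      l.map (fun p => tupP x0 (fun q => if q = p then w q else v q) l) := by
  induction l with
  | nil => rfl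
  | cons p l ih =>
      obtain ⟨hp, hnd'⟩ := List.nodup_cons.mp hnd
      rw [replTups, ih hnd', List.map_map, List.map_cons]
      congr 1
      · rw [tupP_cons, if_pos rfl]
        congr 1
        exact tupP_congr rfl fun q hq => (if_neg (by rintro rfl; exact hp hq)).symm
      · refine List.map_congr_left fun q hq => ?_
        show C.pair (tupP x0 (fun r => if r = q then w r else v r) l) (v p) = _
        rw [tupP_cons, if_neg (by rintro rfl; exact hp hq)]

lemma sum_filterMap {ι β M : Type*} [AddCommMonoid M] (L : List ι) (P : ι → Prop)
    [DecidablePred P] (e : ι → β) (T : β → M) :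
    ((L.filterMap (fun a => if P a then some (e a) else none)).map T).sum =
      (L.map (fun a => if P a then T (e a) else 0)).sum := by
  induction L with
  | nil => rfl
  | cons a L ih =>
      rw [List.filterMap_cons, List.map_cons]
      by_cases hP : P a
      · rw [if_pos hP, if_pos hP, List.map_cons, List.sum_cons, List.sum_cons, ih]
      · rw [if_neg hP, if_neg hP, List.sum_cons, ih, zero_add]

lemma fsplit {ι β : Type*} [DecidableEq ι] (L : List ι) (hnd : L.Nodup) (j' : ι)
    (hj : j' ∈ L) (P : ι → Prop) [DecidablePred P] (hP : P j') (F G : ι → β)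
    (hFG : ∀ j, j ≠ j' → F j = G j) :
    (L.filterMap (fun j => if P j then some (F j) else none)).Perm
      (F j' :: L.filterMap (fun j => if P j ∧ j ≠ j' then some (G j) else none)) := by
  induction L with
  | nil => exact absurd hj (List.not_mem_nil)
  | cons h t ih =>
      obtain ⟨hh, hnd'⟩ := List.nodup_cons.mp hnd
      rw [List.filterMap_cons, List.filterMap_cons]
      by_cases hhj : h = j'
      · subst hhj
        rw [if_pos hP, if_neg (by simp)]
        have ht : t.filterMap (fun j => if P j then some (F j) else none) =
            t.filterMap (fun j => if P j ∧ j ≠ h then some (G j) else none) := by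
          refine List.filterMap_congr fun j hjt => ?_
          have hne : j ≠ h := by rintro rfl; exact hh hjt
          by_cases hPj : P j
          · rw [if_pos hPj, if_pos ⟨hPj, hne⟩, hFG j hne]
          · rw [if_neg hPj, if_neg (by tauto)]
        rw [ht]
      · have hjt : j' ∈ t := by
          rcases List.mem_cons.mp hj with h1 | h1
          · exact absurd h1.symm hhj
          · exact h1
        by_cases hPh : P h
        · rw [if_pos hPh, if_pos ⟨hPh, hhj⟩, hFG h hhj]
          exact ((ih hnd' hjt).cons (G h)).trans (List.Perm.swap _ _ _)
        · rw [if_neg hPh, if_neg (by tauto)]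
          exact ih hnd' hjt

/-- HEq form of `tupleD n y = tupP (y 0) (fun j => y j.succ) (finRange n).reverse`. -/
lemma tupleD_tupP_heq (n : ℕ) (y : Fin (n + 1) → C.Hom Z A) :
    HEq (tupP (y 0) (fun j => y j.succ) (List.finRange n).reverse)
      (C.toCDCData.tupleD n y) := by
  induction n with
  | zero =>
      rw [List.finRange_zero, List.reverse_nil]
      rfl
  | succ n ih =>
      rw [List.finRange_succ_last, List.reverse_append, List.reverse_singleton,
        List.singleton_append, ← List.map_reverse, tupP_cons]
      show HEq (C.pair (tupP (y 0) (fun j => y j.succ) ((List.finRange n).reverse.map Fin.castSucc)) (y (Fin.last n).succ)) (C.toCDCData.tupleD (n+1) y)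
      rw [tupleD, Fin.succ_last]
      refine HEq.trans (heq_pair (by simp) ?_ (y (Fin.last (n + 1)))) HEq.rfl
      refine HEq.trans (tupP_map_heq (y 0) (fun j => y j.succ) Fin.castSucc
        (List.finRange n).reverse) ?_
      have h1 : (fun p => y p.castSucc.succ) = (fun j : Fin n => (fun i => y i.castSucc) j.succ) := by
        funext p
        rw [Fin.succ_castSucc]
      have h2 : y 0 = (fun i : Fin (n+1) => y i.castSucc) 0 :=
        congrArg y (Fin.castSucc_zero).symm
      rw [h1, h2]
      exact ih (fun i => y i.castSucc)

/-- phi-form conversion of `tupleD` into a `tupP` over `finRange`. -/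
lemma tupleD_phi (f : C.Hom A B) (n : ℕ) (y : Fin (n + 1) → C.Hom Z A) :
    C.comp (C.fDeriv f n) (C.toCDCData.tupleD n y) =
      C.comp (C.fDeriv f (List.finRange n).length)
        (tupP (y 0) (fun j => y j.succ) (List.finRange n)) := by
  rw [← cast_phi f (by simp) (tupleD_tupP_heq n y)]
  exact perm_phi f (y 0) (fun j => y j.succ) (List.reverse_perm (List.finRange n))

lemma tupleD_proj_id {A : C.Obj} (n : ℕ) :
    C.toCDCData.tupleD n (fun t => C.toCDCData.projD (A := A) n t) =
      C.id (C.toCDCData.dom A n) := by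
  have h : ∀ t : Fin (n + 1), C.toCDCData.projD (A := A) n t =
      C.comp (C.toCDCData.projD (A := A) n t) (C.id _) := fun t => (C.comp_id _).symm
  rw [funext h]
  exact tupleD_ext n _

end ListLemmas

end FaaProof

namespace FaaProof
open CDCData List

section Arrange

variable {m n : ℕ}

/-- matched-pairs block -/
def Bm (m n : ℕ) (θ : Fin m → Option (Fin n)) : List (Fin (m + 1) × Fin (n + 1)) :=
  (List.finRange m).filterMap fun i => (θ i).map fun j => (i.succ, j.succ)

/-- unmatched-rows block -/
def Br (m n : ℕ) (θ : Fin m → Option (Fin n)) : List (Fin (m + 1) × Fin (n + 1)) :=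
  (List.finRange m).filterMap fun i =>
    if θ i = none then some (i.succ, (0 : Fin (n + 1))) else none

/-- unmatched-columns block -/
def Bc (m n : ℕ) (θ : Fin m → Option (Fin n)) : List (Fin (m + 1) × Fin (n + 1)) :=
  (List.finRange n).filterMap fun j =>
    if ∀ i, θ i ≠ some j then some ((0 : Fin (m + 1)), j.succ) else none

lemma arrange_eq (θ : Fin m → Option (Fin n)) :
    arrangeTail m n θ = (Bm m n θ ++ Br m n θ) ++ Bc m n θ := rfl

/-- row lift -/
def plift (m n : ℕ) : Fin (m + 1) × Fin (n + 1) → Fin (m + 2) × Fin (n + 1) :=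
  fun p => (p.1.castSucc, p.2)

lemma mem_Bm {θ : Fin m → Option (Fin n)} {p} (hp : p ∈ Bm m n θ) :
    ∃ i j, θ i = some j ∧ p = (i.succ, j.succ) := by
  obtain ⟨i, _, hi⟩ := List.mem_filterMap.mp hp
  obtain ⟨j, hj, he⟩ := Option.map_eq_some_iff.mp hi
  exact ⟨i, j, hj, he.symm⟩

lemma mem_Br {θ : Fin m → Option (Fin n)} {p} (hp : p ∈ Br m n θ) :
    ∃ i, θ i = none ∧ p = (i.succ, 0) := by
  obtain ⟨i, _, hi⟩ := List.mem_filterMap.mp hp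
  by_cases h : θ i = none
  · rw [if_pos h] at hi
    exact ⟨i, h, (Option.some_inj.mp hi).symm⟩
  · rw [if_neg h] at hi
    exact absurd hi (Option.some_ne_none _).symm

lemma mem_Bc {θ : Fin m → Option (Fin n)} {p} (hp : p ∈ Bc m n θ) :
    ∃ j, (∀ i, θ i ≠ some j) ∧ p = (0, j.succ) := by
  obtain ⟨j, _, hj⟩ := List.mem_filterMap.mp hp
  by_cases h : ∀ i, θ i ≠ some j
  · rw [if_pos h] at hj
    exact ⟨j, h, (Option.some_inj.mp hj).symm⟩
  · rw [if_neg h] at hj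
    exact absurd hj (Option.some_ne_none _).symm

lemma nodup_arrange (θ : Fin m → Option (Fin n)) : (arrangeTail m n θ).Nodup := by
  rw [arrange_eq]
  have hBm : (Bm m n θ).Nodup := by
    refine List.Nodup.filterMap ?_ (List.nodup_finRange m)
    intro a a' b hb hb'
    obtain ⟨j, _, he⟩ := Option.map_eq_some_iff.mp hb
    obtain ⟨j', _, he'⟩ := Option.map_eq_some_iff.mp hb'
    have := he.trans he'.symm
    exact Fin.succ_injective _ (congrArg Prod.fst this)
  have hBr : (Br m n θ).Nodup := by
    refine List.Nodup.filterMap ?_ (List.nodup_finRange m)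
    intro a a' b hb hb'
    by_cases h : θ a = none
    · rw [if_pos h] at hb
      by_cases h' : θ a' = none
      · rw [if_pos h'] at hb'
        rw [Option.mem_def, Option.some_inj] at hb hb'
        have := hb.trans hb'.symm
        exact Fin.succ_injective _ (congrArg Prod.fst this)
      · rw [if_neg h'] at hb'; exact absurd hb' (by simp)
    · rw [if_neg h] at hb; exact absurd hb (by simp)
  have hBc : (Bc m n θ).Nodup := by
    refine List.Nodup.filterMap ?_ (List.nodup_finRange n)
    intro a a' b hb hb'
    by_cases h : ∀ i, θ i ≠ some a
    · rw [if_pos h] at hb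
      by_cases h' : ∀ i, θ i ≠ some a'
      · rw [if_pos h'] at hb'
        rw [Option.mem_def, Option.some_inj] at hb hb'
        have := hb.trans hb'.symm
        exact Fin.succ_injective _ (congrArg Prod.snd this)
      · rw [if_neg h'] at hb'; exact absurd hb' (by simp)
    · rw [if_neg h] at hb; exact absurd hb (by simp)
  rw [List.nodup_append, List.nodup_append]
  refine ⟨⟨hBm, hBr, ?_⟩, hBc, ?_⟩
  · intro p hp q hp' hpq; subst hpq
    obtain ⟨i, j, _, he⟩ := mem_Bm hp
    obtain ⟨i', _, he'⟩ := mem_Br hp'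
    rw [he] at he'
    exact Fin.succ_ne_zero j (congrArg Prod.snd he')
  · intro p hp q hp' hpq; subst hpq
    obtain ⟨j', _, he'⟩ := mem_Bc hp'
    rcases List.mem_append.mp hp with h | h
    · obtain ⟨i, j, _, he⟩ := mem_Bm h
      rw [he] at he'
      exact Fin.succ_ne_zero i (congrArg Prod.fst he')
    · obtain ⟨i, _, he⟩ := mem_Br h
      rw [he] at he'
      exact Fin.succ_ne_zero i (congrArg Prod.fst he')

lemma Bm_snoc_none (θ : Fin m → Option (Fin n)) :
    Bm (m + 1) n (Fin.snoc θ none) = (Bm m n θ).map (plift m n) := by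
  rw [Bm, Bm, List.finRange_succ_last, List.filterMap_append, List.filterMap_map,
    List.map_filterMap]
  have h2 : List.filterMap
      (fun i : Fin (m + 1) => ((Fin.snoc θ none : Fin (m+1) → Option (Fin n)) i).map fun j => (i.succ, j.succ))
      [Fin.last m] = [] := by
    simp [Fin.snoc_last]
  rw [h2, List.append_nil]
  refine List.filterMap_congr fun i _ => ?_
  show ((Fin.snoc θ none : Fin (m+1) → Option (Fin n)) i.castSucc).map (fun j => (i.castSucc.succ, j.succ)) = _
  rw [Fin.snoc_castSucc, Option.map_map]
  refine congrArg (fun g => Option.map g (θ i)) ?_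
  funext j
  show (i.castSucc.succ, j.succ) = plift m n (i.succ, j.succ)
  rw [plift, Fin.succ_castSucc]

lemma Bm_snoc_some (θ : Fin m → Option (Fin n)) (j' : Fin n) :
    Bm (m + 1) n (Fin.snoc θ (some j')) =
      (Bm m n θ).map (plift m n) ++ [(Fin.last (m + 1), j'.succ)] := by
  rw [Bm, Bm, List.finRange_succ_last, List.filterMap_append, List.filterMap_map,
    List.map_filterMap]
  congr 1
  · refine List.filterMap_congr fun i _ => ?_
    show ((Fin.snoc θ (some j') : Fin (m+1) → Option (Fin n)) i.castSucc).map (fun j => (i.castSucc.succ, j.succ)) = _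
    rw [Fin.snoc_castSucc, Option.map_map]
    refine congrArg (fun g => Option.map g (θ i)) ?_
    funext j
    show (i.castSucc.succ, j.succ) = plift m n (i.succ, j.succ)
    rw [plift, Fin.succ_castSucc]
  · simp [Fin.snoc_last, Fin.succ_last]

lemma Br_snoc_none (θ : Fin m → Option (Fin n)) :
    Br (m + 1) n (Fin.snoc θ none) =
      (Br m n θ).map (plift m n) ++ [(Fin.last (m + 1), 0)] := by
  rw [Br, Br, List.finRange_succ_last, List.filterMap_append, List.filterMap_map,
    List.map_filterMap]
  congr 1
  · refine List.filterMap_congr fun i _ => ?_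
    show (if (Fin.snoc θ none : Fin (m+1) → Option (Fin n)) i.castSucc = none then some (i.castSucc.succ, (0 : Fin (n+1))) else none) = _
    rw [Fin.snoc_castSucc, apply_ite (Option.map (plift m n))]
    refine if_congr Iff.rfl ?_ rfl
    show _ = some (plift m n (i.succ, 0))
    rw [plift, Fin.succ_castSucc]
  · simp [Fin.snoc_last, Fin.succ_last]

lemma Br_snoc_some (θ : Fin m → Option (Fin n)) (j' : Fin n) :
    Br (m + 1) n (Fin.snoc θ (some j')) = (Br m n θ).map (plift m n) := by
  rw [Br, Br, List.finRange_succ_last, List.filterMap_append, List.filterMap_map,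
    List.map_filterMap]
  have h2 : List.filterMap
      (fun i : Fin (m + 1) => if (Fin.snoc θ (some j') : Fin (m+1) → Option (Fin n)) i = none
        then some (i.succ, (0 : Fin (n+1))) else none) [Fin.last m] = [] := by
    simp [Fin.snoc_last]
  rw [h2, List.append_nil]
  refine List.filterMap_congr fun i _ => ?_
  show (if (Fin.snoc θ (some j') : Fin (m+1) → Option (Fin n)) i.castSucc = none then some (i.castSucc.succ, (0 : Fin (n+1))) else none) = _
  rw [Fin.snoc_castSucc, apply_ite (Option.map (plift m n))]
  refine if_congr Iff.rfl ?_ rfl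
  show _ = some (plift m n (i.succ, 0))
  rw [plift, Fin.succ_castSucc]

lemma Bc_map_lift (θ : Fin m → Option (Fin n)) :
    (Bc m n θ).map (plift m n) =
      (List.finRange n).filterMap (fun j =>
        if ∀ i, θ i ≠ some j then some ((0 : Fin (m + 2)), j.succ) else none) := by
  rw [Bc, List.map_filterMap]
  refine List.filterMap_congr fun j _ => ?_
  rw [apply_ite (Option.map (plift m n))]
  refine if_congr Iff.rfl ?_ rfl
  show some (plift m n (0, j.succ)) = _
  rw [plift]
  simp

lemma Bc_snoc_none (θ : Fin m → Option (Fin n)) :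
    Bc (m + 1) n (Fin.snoc θ none) = (Bc m n θ).map (plift m n) := by
  rw [Bc_map_lift, Bc]
  refine List.filterMap_congr fun j _ => ?_
  refine if_congr ?_ rfl rfl
  constructor
  · intro h i
    have := h i.castSucc
    rwa [Fin.snoc_castSucc] at this
  · intro h i
    refine Fin.lastCases ?_ (fun i' => ?_) i
    · rw [Fin.snoc_last]
      exact fun hc => nomatch hc
    · rw [Fin.snoc_castSucc]
      exact h i'

lemma Bc_snoc_some (θ : Fin m → Option (Fin n)) (j' : Fin n) :
    Bc (m + 1) n (Fin.snoc θ (some j')) =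
      (List.finRange n).filterMap (fun j =>
        if (∀ i, θ i ≠ some j) ∧ j ≠ j' then some ((0 : Fin (m + 2)), j.succ) else none) := by
  rw [Bc]
  refine List.filterMap_congr fun j _ => ?_
  refine if_congr ?_ rfl rfl
  constructor
  · intro h
    refine ⟨fun i => ?_, fun hjj => ?_⟩
    · have := h i.castSucc
      rwa [Fin.snoc_castSucc] at this
    · have := h (Fin.last m)
      rw [Fin.snoc_last] at this
      exact this (by rw [hjj])
  · rintro ⟨h1, h2⟩ i
    refine Fin.lastCases ?_ (fun i' => ?_) i
    · rw [Fin.snoc_last]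
      intro hc
      exact h2 (Option.some_inj.mp hc).symm
    · rw [Fin.snoc_castSucc]
      exact h1 i'

end Arrange

end FaaProof

namespace FaaProof
open CDCData List

section Fiber

variable {m n : ℕ}

lemma mem_pi_iff {θ : Fin m → Option (Fin n)} :
    θ ∈ partialInjs m n ↔ ∀ i j a, θ i = some a → θ j = some a → i = j := by
  simp [partialInjs]

lemma restr_mem {θ' : Fin (m + 1) → Option (Fin n)} (h : θ' ∈ partialInjs (m + 1) n) :
    (fun i : Fin m => θ' i.castSucc) ∈ partialInjs m n := by
  rw [mem_pi_iff] at h ⊢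
  intro i j a hi hj
  exact Fin.castSucc_injective m (h i.castSucc j.castSucc a hi hj)

lemma snoc_none_mem {θ : Fin m → Option (Fin n)} (hθ : θ ∈ partialInjs m n) :
    (Fin.snoc θ none : Fin (m + 1) → Option (Fin n)) ∈ partialInjs (m + 1) n := by
  rw [mem_pi_iff] at hθ ⊢
  intro i j a
  refine Fin.lastCases ?_ (fun i' => ?_) i
  · rw [Fin.snoc_last]
    exact fun h => absurd h (by simp)
  · refine Fin.lastCases ?_ (fun j' => ?_) j
    · rw [Fin.snoc_last]
      exact fun _ h => absurd h (by simp)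
    · rw [Fin.snoc_castSucc, Fin.snoc_castSucc]
      intro hi hj
      rw [hθ i' j' a hi hj]

lemma snoc_some_mem {θ : Fin m → Option (Fin n)} (hθ : θ ∈ partialInjs m n) {j' : Fin n}
    (hj' : ∀ i, θ i ≠ some j') :
    (Fin.snoc θ (some j') : Fin (m + 1) → Option (Fin n)) ∈ partialInjs (m + 1) n := by
  rw [mem_pi_iff] at hθ ⊢
  intro i j a
  refine Fin.lastCases ?_ (fun i' => ?_) i
  · refine Fin.lastCases ?_ (fun j2 => ?_) j
    · exact fun _ _ => rfl
    · rw [Fin.snoc_last, Fin.snoc_castSucc]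
      intro hi hj
      rw [← Option.some_inj.mp hi] at hj
      exact absurd hj (hj' j2)
  · refine Fin.lastCases ?_ (fun j2 => ?_) j
    · rw [Fin.snoc_last, Fin.snoc_castSucc]
      intro hi hj
      rw [← Option.some_inj.mp hj] at hi
      exact absurd hi (hj' i')
    · rw [Fin.snoc_castSucc, Fin.snoc_castSucc]
      intro hi hj
      rw [hθ i' j2 a hi hj]

lemma pi_fiber {M : Type v} [AddCommMonoid M] (F : (Fin (m + 1) → Option (Fin n)) → M) :
    ∑ θ' ∈ partialInjs (m + 1) n, F θ' =
      ∑ θ ∈ partialInjs m n, (F (Fin.snoc θ none) +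
        ∑ j ∈ Finset.univ.filter (fun j : Fin n => ∀ i, θ i ≠ some j),
          F (Fin.snoc θ (some j))) := by
  rw [Finset.sum_add_distrib]
  rw [← Finset.sum_filter_add_sum_filter_not (partialInjs (m + 1) n)
    (fun θ' => θ' (Fin.last m) = none) F]
  congr 1
  · refine Finset.sum_nbij' (fun θ' => fun i : Fin m => θ' i.castSucc)
      (fun θ => (Fin.snoc θ none : Fin (m + 1) → Option (Fin n)))
      ?_ ?_ ?_ ?_ ?_
    · intro θ' hθ'
      exact restr_mem (Finset.mem_filter.mp hθ').1
    · intro θ hθ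
      refine Finset.mem_filter.mpr ⟨snoc_none_mem hθ, ?_⟩
      exact Fin.snoc_last _ _
    · intro θ' hθ'
      funext i
      refine Fin.lastCases ?_ (fun i' => ?_) i
      · simp only [Fin.snoc_last]
        exact ((Finset.mem_filter.mp hθ').2).symm
      · simp only [Fin.snoc_castSucc]
    · intro θ hθ
      funext i
      exact Fin.snoc_castSucc _ _ i
    · intro θ' hθ'
      congr 1
      funext i
      refine Fin.lastCases ?_ (fun i' => ?_) i
      · simp only [Fin.snoc_last]
        exact (Finset.mem_filter.mp hθ').2
      · simp only [Fin.snoc_castSucc]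
  · have hprod : ∑ θ ∈ partialInjs m n,
        ∑ j ∈ Finset.univ.filter (fun j : Fin n => ∀ i, θ i ≠ some j),
          F (Fin.snoc θ (some j)) =
        ∑ q ∈ ((partialInjs m n) ×ˢ (Finset.univ : Finset (Fin n))).filter
            (fun q => ∀ i, q.1 i ≠ some q.2),
          F (Fin.snoc q.1 (some q.2)) := by
      rw [Finset.sum_filter, Finset.sum_product]
      exact Finset.sum_congr rfl fun θ _ => Finset.sum_filter _ _
    rw [hprod]
    refine Finset.sum_bij'
      (fun θ' hθ' => ((fun i : Fin m => θ' i.castSucc),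
        Option.get (θ' (Fin.last m))
          (Option.ne_none_iff_isSome.mp (Finset.mem_filter.mp hθ').2)))
      (fun q _ => (Fin.snoc q.1 (some q.2) : Fin (m + 1) → Option (Fin n)))
      ?_ ?_ ?_ ?_ ?_
    · intro θ' hθ'
      have hmem := (Finset.mem_filter.mp hθ').1
      refine Finset.mem_filter.mpr ⟨Finset.mem_product.mpr ⟨restr_mem hmem, Finset.mem_univ _⟩, ?_⟩
      intro i hc
      have hlast : θ' (Fin.last m) =
          some (Option.get (θ' (Fin.last m))
            (Option.ne_none_iff_isSome.mp (Finset.mem_filter.mp hθ').2)) :=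
        (Option.some_get _).symm
      exact absurd ((mem_pi_iff.mp hmem) i.castSucc (Fin.last m) _ hc hlast)
        (Fin.ne_of_lt (Fin.castSucc_lt_last i))
    · intro q hq
      obtain ⟨hq1, hq2⟩ := Finset.mem_filter.mp hq
      refine Finset.mem_filter.mpr
        ⟨snoc_some_mem (Finset.mem_product.mp hq1).1 hq2, ?_⟩
      simp [Fin.snoc_last]
    · intro θ' hθ'
      funext i
      refine Fin.lastCases ?_ (fun i' => ?_) i
      · simp only [Fin.snoc_last, Option.some_get]
      · simp only [Fin.snoc_castSucc]
    · intro q hq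
      refine Prod.ext ?_ ?_
      · funext i
        show (Fin.snoc q.1 (some q.2) : Fin (m + 1) → Option (Fin n)) i.castSucc = q.1 i
        exact Fin.snoc_castSucc _ _ i
      · simp [Fin.snoc_last]
    · intro θ' hθ'
      congr 1
      funext i
      refine Fin.lastCases ?_ (fun i' => ?_) i
      · simp only [Fin.snoc_last, Option.some_get]
      · simp only [Fin.snoc_castSucc]

end Fiber

end FaaProof

namespace FaaProof
open CDCData List

variable {k : Type u} [CommSemiring k] {C : CDC k}

section Match

variable {A B X : C.Obj} {m n : ℕ}

/-- the value at a position of the full matrix -/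
abbrev Xh (x : Fin (m + 2) → Fin (n + 1) → C.Hom X A) :
    Fin (m + 2) × Fin (n + 1) → C.Hom X A := fun p => x p.1 p.2

/-- the value with the row index shifted into the first `m+1` rows -/
abbrev vh (x : Fin (m + 2) → Fin (n + 1) → C.Hom X A) :
    Fin (m + 1) × Fin (n + 1) → C.Hom X A := fun p => x p.1.castSucc p.2

/-- the direction values: last row on row `0`, zero elsewhere -/
abbrev wh (x : Fin (m + 2) → Fin (n + 1) → C.Hom X A) :
    Fin (m + 1) × Fin (n + 1) → C.Hom X A := fun p =>
  Fin.cases (motive := fun _ => C.Hom X A) (x (Fin.last (m + 1)) p.2) (fun _ => 0) p.1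

lemma ext_match (f : C.Hom A B) (x : Fin (m + 2) → Fin (n + 1) → C.Hom X A)
    (θ : Fin m → Option (Fin n)) :
    C.comp (C.fDeriv f ((arrangeTail m n θ).length + 1))
        (C.pair (tupP (x 0 0) (vh x) (arrangeTail m n θ)) (x (Fin.last (m + 1)) 0)) =
      C.comp (C.fDeriv f (arrangeTail (m + 1) n (Fin.snoc θ none)).length)
        (tupP (x 0 0) (Xh x) (arrangeTail (m + 1) n (Fin.snoc θ none))) := by
  have h3 : (fun p => Xh x (plift m n p)) = vh x := funext fun p => by simp [plift]
  have h1 : HEq (tupP (x 0 0) (vh x) (arrangeTail m n θ))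
      (tupP (x 0 0) (Xh x) ((arrangeTail m n θ).map (plift m n))) := by
    have h2 := tupP_map_heq (x 0 0) (Xh x) (plift m n) (arrangeTail m n θ)
    rw [h3] at h2
    exact h2.symm
  have hcast := cast_phi (C := C) f
    (K := (arrangeTail m n θ).length + 1)
    (K' := ((Fin.last (m + 1), (0 : Fin (n + 1))) ::
      (arrangeTail m n θ).map (plift m n)).length)
    (by simp)
    (heq_pair (by simp) h1 (x (Fin.last (m + 1)) 0))
  rw [hcast]
  have hperm : ((Fin.last (m + 1), (0 : Fin (n + 1))) ::
      (arrangeTail m n θ).map (plift m n)).Perm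
      (arrangeTail (m + 1) n (Fin.snoc θ none)) := by
    rw [arrange_eq (Fin.snoc θ none), Bm_snoc_none, Br_snoc_none, Bc_snoc_none,
      arrange_eq θ, List.map_append, List.map_append]
    have heq : ((Bm m n θ).map (plift m n) ++ ((Br m n θ).map (plift m n) ++
          [(Fin.last (m + 1), (0 : Fin (n + 1)))])) ++ (Bc m n θ).map (plift m n) =
        ((Bm m n θ).map (plift m n) ++ (Br m n θ).map (plift m n)) ++
          (Fin.last (m + 1), (0 : Fin (n + 1))) :: (Bc m n θ).map (plift m n) := by
      simp [List.append_assoc]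
    rw [heq]
    exact List.perm_middle.symm
  exact perm_phi f (x 0 0) (Xh x) hperm

lemma some_match (f : C.Hom A B) (x : Fin (m + 2) → Fin (n + 1) → C.Hom X A)
    (θ : Fin m → Option (Fin n)) (j' : Fin n) (hj' : ∀ i, θ i ≠ some j') :
    C.comp (C.fDeriv f (arrangeTail m n θ).length)
        (tupP (x 0 0)
          (fun q => if q = ((0 : Fin (m + 1)), j'.succ) then wh x q else vh x q)
          (arrangeTail m n θ)) =
      C.comp (C.fDeriv f (arrangeTail (m + 1) n (Fin.snoc θ (some j'))).length)
        (tupP (x 0 0) (Xh x) (arrangeTail (m + 1) n (Fin.snoc θ (some j')))) := by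
  set p0 : Fin (m + 1) × Fin (n + 1) := ((0 : Fin (m + 1)), j'.succ) with hp0
  set lift' : Fin (m + 1) × Fin (n + 1) → Fin (m + 2) × Fin (n + 1) :=
    fun p => if p = p0 then (Fin.last (m + 1), j'.succ) else plift m n p with hlift'
  have hval : (fun p => Xh x (lift' p)) =
      (fun q => if q = p0 then wh x q else vh x q) := by
    funext p
    by_cases hp : p = p0
    · subst hp
      rw [hlift']
      simp [wh, Xh, hp0]
    · rw [hlift']
      simp only [if_neg hp]
      simp [plift]
  have h1 : HEq (tupP (x 0 0)
      (fun q => if q = p0 then wh x q else vh x q) (arrangeTail m n θ))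
      (tupP (x 0 0) (Xh x) ((arrangeTail m n θ).map lift')) := by
    have h2 := tupP_map_heq (x 0 0) (Xh x) lift' (arrangeTail m n θ)
    rw [hval] at h2
    exact h2.symm
  rw [cast_phi (C := C) f (by simp) h1]
  refine perm_phi f (x 0 0) (Xh x) ?_
  -- the permutation
  have hBmBr : ((Bm m n θ ++ Br m n θ).map lift') = (Bm m n θ ++ Br m n θ).map (plift m n) := by
    refine List.map_congr_left fun p hp => ?_
    have hne : p ≠ p0 := by
      rcases List.mem_append.mp hp with h | h
      · obtain ⟨i, j, _, he⟩ := mem_Bm h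
        rw [he, hp0]
        intro hc
        exact Fin.succ_ne_zero i (congrArg Prod.fst hc)
      · obtain ⟨i, _, he⟩ := mem_Br h
        rw [he, hp0]
        intro hc
        exact Fin.succ_ne_zero i (congrArg Prod.fst hc)
    rw [hlift']
    simp only [if_neg hne]
  have hBc : ((Bc m n θ).map lift').Perm
      ((Fin.last (m + 1), j'.succ) ::
        (List.finRange n).filterMap (fun j =>
          if (∀ i, θ i ≠ some j) ∧ j ≠ j' then some ((0 : Fin (m + 2)), j.succ) else none)) := by
    rw [Bc, List.map_filterMap]
    have hre : ∀ j : Fin n,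
        Option.map lift' (if ∀ i, θ i ≠ some j then some ((0 : Fin (m + 1)), j.succ) else none) =
        (if ∀ i, θ i ≠ some j then some (lift' ((0 : Fin (m + 1)), j.succ)) else none) := by
      intro j
      rw [apply_ite (Option.map lift')]
      rfl
    rw [List.filterMap_congr fun j _ => hre j]
    have hsplit := fsplit (List.finRange n) (List.nodup_finRange n) j'
      (List.mem_finRange j') (fun j => ∀ i, θ i ≠ some j) hj'
      (fun j => lift' ((0 : Fin (m + 1)), j.succ))
      (fun j => ((0 : Fin (m + 2)), j.succ))
      (fun j hne => by
        rw [hlift']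
        have : ((0 : Fin (m + 1)), j.succ) ≠ p0 := by
          rw [hp0]
          intro hc
          exact hne (Fin.succ_injective n (congrArg Prod.snd hc))
        simp only [if_neg this]
        simp [plift])
    have hFj' : lift' ((0 : Fin (m + 1)), j'.succ) = (Fin.last (m + 1), j'.succ) := by
      rw [hlift']
      simp [hp0]
    simpa only [hFj'] using hsplit
  -- assemble
  rw [arrange_eq θ, arrange_eq (Fin.snoc θ (some j')), Bm_snoc_some, Br_snoc_some,
    Bc_snoc_some, List.map_append]
  rw [hBmBr]
  refine ((List.Perm.append_left ((Bm m n θ ++ Br m n θ).map (plift m n)) hBc).trans ?_)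
  rw [List.map_append]
  have e1 : (((Bm m n θ).map (plift m n) ++ [(Fin.last (m + 1), j'.succ)]) ++
        (Br m n θ).map (plift m n)) ++
        (List.finRange n).filterMap (fun j =>
          if (∀ i, θ i ≠ some j) ∧ j ≠ j' then some ((0 : Fin (m + 2)), j.succ) else none) =
      (Bm m n θ).map (plift m n) ++ ((Fin.last (m + 1), j'.succ) ::
        ((Br m n θ).map (plift m n) ++
          (List.finRange n).filterMap (fun j =>
            if (∀ i, θ i ≠ some j) ∧ j ≠ j' then some ((0 : Fin (m + 2)), j.succ)
            else none))) := by
    simp [List.append_assoc]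
  rw [e1]
  calc ((Bm m n θ).map (plift m n) ++ (Br m n θ).map (plift m n)) ++
        ((Fin.last (m + 1), j'.succ) ::
          (List.finRange n).filterMap (fun j =>
            if (∀ i, θ i ≠ some j) ∧ j ≠ j' then some ((0 : Fin (m + 2)), j.succ)
            else none))
      ~ (Fin.last (m + 1), j'.succ) ::
          (((Bm m n θ).map (plift m n) ++ (Br m n θ).map (plift m n)) ++
            (List.finRange n).filterMap (fun j =>
              if (∀ i, θ i ≠ some j) ∧ j ≠ j' then some ((0 : Fin (m + 2)), j.succ)
              else none)) := List.perm_middle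
    _ = (Fin.last (m + 1), j'.succ) ::
          ((Bm m n θ).map (plift m n) ++ ((Br m n θ).map (plift m n) ++
            (List.finRange n).filterMap (fun j =>
              if (∀ i, θ i ≠ some j) ∧ j ≠ j' then some ((0 : Fin (m + 2)), j.succ)
              else none))) := by rw [List.append_assoc]
    _ ~ _ := List.perm_middle.symm

end Match

end FaaProof

namespace FaaProof
open CDCData List

variable {k : Type u} [CommSemiring k] {C : CDC k}

section Final

variable {A B X : C.Obj} {m n : ℕ}

lemma bc_sum {M : Type v} [AddCommMonoid M] (θ : Fin m → Option (Fin n))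
    (G : Fin (m + 1) × Fin (n + 1) → M) :
    ((Bc m n θ).map G).sum =
      ∑ j ∈ Finset.univ.filter (fun j : Fin n => ∀ i, θ i ≠ some j), G (0, j.succ) := by
  rw [Bc, sum_filterMap (List.finRange n) (fun j => ∀ i, θ i ≠ some j)
    (fun j => ((0 : Fin (m + 1)), j.succ)) G, ← Fin.sum_univ_def, ← Finset.sum_filter]

lemma repl_match (f : C.Hom A B) (x : Fin (m + 2) → Fin (n + 1) → C.Hom X A)
    (θ : Fin m → Option (Fin n)) :
    ((replTups (x 0 0) (vh x) (wh x) (arrangeTail m n θ)).map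
        (fun T => C.comp (C.fDeriv f (arrangeTail m n θ).length) T)).sum =
      ∑ j ∈ Finset.univ.filter (fun j : Fin n => ∀ i, θ i ≠ some j),
        C.comp (C.fDeriv f (arrangeTail (m + 1) n (Fin.snoc θ (some j))).length)
          (tupP (x 0 0) (Xh x) (arrangeTail (m + 1) n (Fin.snoc θ (some j)))) := by
  rw [replTups_nodup _ _ _ _ (nodup_arrange θ), List.map_map]
  have key : ∀ G : Fin (m + 1) × Fin (n + 1) → C.Hom X B,
      (∀ p ∈ Bm m n θ ++ Br m n θ, G p = 0) →
      ((arrangeTail m n θ).map G).sum =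
        ∑ j ∈ Finset.univ.filter (fun j : Fin n => ∀ i, θ i ≠ some j), G (0, j.succ) := by
    intro G hzero
    rw [arrange_eq θ, List.map_append, List.sum_append,
      List.sum_eq_zero (fun y hy => by
        obtain ⟨p, hp, rfl⟩ := List.mem_map.mp hy
        exact hzero p hp),
      zero_add, bc_sum]
  rw [key _ ?hz]
  case hz =>
    intro p hp
    show C.comp (C.fDeriv f (arrangeTail m n θ).length)
      (tupP (x 0 0) (fun q => if q = p then wh x q else vh x q) (arrangeTail m n θ)) = 0
    have hmem : p ∈ arrangeTail m n θ := by
      rw [arrange_eq θ]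
      exact List.mem_append_left _ hp
    refine zero_phi f (x 0 0) _ hmem ?_
    rw [if_pos rfl]
    rcases List.mem_append.mp hp with h | h
    · obtain ⟨i, j, _, rfl⟩ := mem_Bm h
      simp [wh]
    · obtain ⟨i, _, rfl⟩ := mem_Br h
      simp [wh]
  refine Finset.sum_congr rfl fun j hj => ?_
  have hcond : ∀ i, θ i ≠ some j := (Finset.mem_filter.mp hj).2
  exact some_match f x θ j hcond

end Final

end FaaProof


/-!
STATEMENT 10: In a cartesian differential category, for any `f : A → B` and
`m, n ≥ 0`, `(f⁽ⁿ⁾)⁽ᵐ⁾(x⃗) = ∑_{θ : [m] ≃ [n]} f^{(|θ|)}(x_{θ₍₁₎θ₍₂₎})`,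
summing over partial isomorphisms `θ` between subsets of `[m]` and `[n]`; the
input is a doubly indexed family `x_{ij} : X → A` (`0 ≤ i ≤ m`, `0 ≤ j ≤ n`)
arranged as an element of `(A × Aⁿ) × (A × Aⁿ)ᵐ`, and `x_{θ₍₁₎θ₍₂₎}` is the
arrangement `x₀₀`, then `x_{i θ(i)}` for `i` in the domain of `θ`, then
`x_{i' 0}` for `i'` outside the domain, then `x_{0 j'}` for `j'` outside the
image (as produced by `arrangeTail`; the expression is symmetric in the last
`|θ|` slots).
-/
theorem statement10 {k : Type u} [CommSemiring k] (C : CDC k)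
    {A B : C.Obj} (f : C.Hom A B) (m n : ℕ) (X : C.Obj)
    (x : Fin (m + 1) → Fin (n + 1) → C.Hom X A) :
    C.comp (C.fDeriv (C.fDeriv f n) m)
        (C.toCDCData.tupleD m (fun i => C.toCDCData.tupleD n (x i))) =
      ∑ θ ∈ partialInjs m n,
        C.comp
          (C.fDeriv f ((arrangeTail m n θ).map (fun p => x p.1 p.2)).length)
          (C.toCDCData.tupList (x 0 0)
            ((arrangeTail m n θ).map (fun p => x p.1 p.2))) := by
  open FaaProof CDCData in
  induction m generalizing X with
  | zero =>
      rw [Finset.sum_congr rfl fun θ _ =>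
        phi_map f (x 0 0) (fun p => x p.1 p.2) (arrangeTail 0 n θ)]
      have hset : partialInjs 0 n = {fun _ : Fin 0 => (none : Option (Fin n))} := by
        apply Finset.ext
        intro θ
        simp only [partialInjs, Finset.mem_filter, Finset.mem_univ, true_and,
          Finset.mem_singleton]
        exact ⟨fun _ => funext fun i => i.elim0, fun _ i => i.elim0⟩
      rw [hset, Finset.sum_singleton]
      have harr : arrangeTail 0 n (fun _ => (none : Option (Fin n))) =
          (List.finRange n).map (fun j => ((0 : Fin 1), j.succ)) := by
        rw [arrange_eq]
        have h1 : Bm 0 n (fun _ => (none : Option (Fin n))) = [] := by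
          rw [Bm]; simp
        have h2 : Br 0 n (fun _ => (none : Option (Fin n))) = [] := by
          rw [Br]; simp
        have h3 : Bc 0 n (fun _ => (none : Option (Fin n))) =
            (List.finRange n).map (fun j => ((0 : Fin 1), j.succ)) := by
          rw [Bc]
          refine Eq.trans (List.filterMap_congr (g := fun j => some ((0 : Fin 1), j.succ))
            fun j _ => if_pos fun i => i.elim0) ?_
          exact congrFun List.filterMap_eq_map _
        rw [h1, h2, h3, List.nil_append, List.nil_append]
      calc C.comp (C.fDeriv (C.fDeriv f n) 0)
            (C.toCDCData.tupleD 0 fun i => C.toCDCData.tupleD n (x i))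
          = C.comp (C.fDeriv f n) (C.toCDCData.tupleD n (x 0)) := rfl
        _ = C.comp (C.fDeriv f (List.finRange n).length)
              (tupP (x 0 0) (fun j => x 0 j.succ) (List.finRange n)) := tupleD_phi f n (x 0)
        _ = C.comp
              (C.fDeriv f ((List.finRange n).map (fun j => ((0 : Fin 1), j.succ))).length)
              (tupP (x 0 0) (fun p => x p.1 p.2)
                ((List.finRange n).map (fun j => ((0 : Fin 1), j.succ)))) :=
            (cast_phi f (by simp)
              (tupP_map_heq (x 0 0) (fun p => x p.1 p.2)
                (fun j => ((0 : Fin 1), j.succ)) (List.finRange n))).symm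
        _ = _ := by rw [harr]
  | succ m ih =>
      rw [Finset.sum_congr rfl fun θ' _ =>
        phi_map f (x 0 0) (fun p => x p.1 p.2) (arrangeTail (m + 1) n θ')]
      rw [pi_fiber (fun θ' => C.comp (C.fDeriv f (arrangeTail (m + 1) n θ').length)
        (tupP (x 0 0) (Xh x) (arrangeTail (m + 1) n θ')))]
      have h_ihp : ∀ (Y : C.Obj) (y : Fin (m + 1) → Fin (n + 1) → C.Hom Y A),
          C.comp (C.fDeriv (C.fDeriv f n) m)
            (C.toCDCData.tupleD m (fun i => C.toCDCData.tupleD n (y i))) =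
          ∑ θ ∈ partialInjs m n,
            C.comp (C.fDeriv f (arrangeTail m n θ).length)
              (tupP (y 0 0) (fun p => y p.1 p.2) (arrangeTail m n θ)) :=
        fun Y y => (ih Y y).trans (Finset.sum_congr rfl fun θ _ =>
          phi_map f (y 0 0) (fun p => y p.1 p.2) (arrangeTail m n θ))
      have hid : (C.toCDCData.tupleD m fun i => C.toCDCData.tupleD n fun j =>
          C.comp (C.toCDCData.projD n j)
            (C.toCDCData.projD (A := C.toCDCData.dom A n) m i)) =
          C.id (C.toCDCData.dom (C.toCDCData.dom A n) m) := by
        have h1 : ∀ i : Fin (m + 1), (C.toCDCData.tupleD n fun j =>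
            C.comp (C.toCDCData.projD n j)
              (C.toCDCData.projD (A := C.toCDCData.dom A n) m i)) =
            C.toCDCData.projD (A := C.toCDCData.dom A n) m i := fun i => tupleD_ext n _
        rw [funext h1, tupleD_proj_id]
      have hmgen := h_ihp (C.toCDCData.dom (C.toCDCData.dom A n) m)
        (fun i j => C.comp (C.toCDCData.projD n j)
          (C.toCDCData.projD (A := C.toCDCData.dom A n) m i))
      rw [hid, C.comp_id] at hmgen
      have hdgen : C.D (C.fDeriv (C.fDeriv f n) m) =
          ∑ θ ∈ partialInjs m n,
            C.comp (C.D (C.fDeriv f (arrangeTail m n θ).length))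
              (C.pair
                (C.comp (tupP
                  (C.comp (C.toCDCData.projD n 0)
                    (C.toCDCData.projD (A := C.toCDCData.dom A n) m 0))
                  (fun p : Fin (m + 1) × Fin (n + 1) => C.comp (C.toCDCData.projD n p.2)
                    (C.toCDCData.projD (A := C.toCDCData.dom A n) m p.1))
                  (arrangeTail m n θ)) C.fst)
                (C.comp (tupP
                  (C.comp (C.toCDCData.projD n 0)
                    (C.toCDCData.projD (A := C.toCDCData.dom A n) m 0))
                  (fun p : Fin (m + 1) × Fin (n + 1) => C.comp (C.toCDCData.projD n p.2)
                    (C.toCDCData.projD (A := C.toCDCData.dom A n) m p.1))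
                  (arrangeTail m n θ)) C.snd)) := by
        rw [hmgen, D_sum]
        refine Finset.sum_congr rfl fun θ _ => D_comp_lin _ ?_
        exact Lin.tupP ((Lin.projD n 0).comp (Lin.projD m 0))
          (fun p : Fin (m + 1) × Fin (n + 1) => (Lin.projD n p.2).comp (Lin.projD m p.1)) _
      rw [fDeriv_succ, show (C.toCDCData.tupleD (m + 1) fun i => C.toCDCData.tupleD n (x i)) =
        C.pair (C.toCDCData.tupleD m fun i => C.toCDCData.tupleD n (x i.castSucc))
          (C.toCDCData.tupleD n (x (Fin.last (m + 1)))) from rfl]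
      rw [C.comp_assoc, pair_comp, C.fst_pair, zpad_comp, C.snd_pair]
      rw [hdgen, FaaProof.sum_comp]
      refine Finset.sum_congr rfl fun θ hθ => ?_
      rw [C.comp_assoc, pair_comp, C.comp_assoc, C.fst_pair, C.comp_assoc, C.snd_pair]
      have hpt : C.comp (tupP
          (C.comp (C.toCDCData.projD n 0)
            (C.toCDCData.projD (A := C.toCDCData.dom A n) m 0))
          (fun p : Fin (m + 1) × Fin (n + 1) => C.comp (C.toCDCData.projD n p.2)
            (C.toCDCData.projD (A := C.toCDCData.dom A n) m p.1))
          (arrangeTail m n θ))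
          (C.toCDCData.tupleD m fun i => C.toCDCData.tupleD n (x i.castSucc)) =
          tupP (x 0 0) (vh x) (arrangeTail m n θ) := by
        rw [tupP_comp]
        refine tupP_congr ?_ fun p _ => ?_
        · simp only [CDC.comp_assoc, projD_tupleD, Fin.castSucc_zero]
        · simp only [CDC.comp_assoc, projD_tupleD]
      have hdir : C.comp (tupP
          (C.comp (C.toCDCData.projD n 0)
            (C.toCDCData.projD (A := C.toCDCData.dom A n) m 0))
          (fun p : Fin (m + 1) × Fin (n + 1) => C.comp (C.toCDCData.projD n p.2)
            (C.toCDCData.projD (A := C.toCDCData.dom A n) m p.1))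
          (arrangeTail m n θ))
          (C.toCDCData.zpad m (C.toCDCData.tupleD n (x (Fin.last (m + 1))))) =
          tupP (x (Fin.last (m + 1)) 0) (wh x) (arrangeTail m n θ) := by
        rw [tupP_comp]
        refine tupP_congr ?_ fun p _ => ?_
        · simp only [CDC.comp_assoc, projD_zpad_zero, projD_tupleD]
        · obtain ⟨i, j⟩ := p
          refine Fin.cases ?_ (fun i' => ?_) i
          · simp only [CDC.comp_assoc, projD_zpad_zero, projD_tupleD, wh, Fin.cases_zero]
          · simp only [CDC.comp_assoc, projD_zpad_succ, projD_comp_zero, wh, Fin.cases_succ]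
      rw [hpt, hdir,
        master f (x 0 0) (x (Fin.last (m + 1)) 0) (vh x) (wh x) (arrangeTail m n θ)]
      rw [ext_match f x θ, repl_match f x θ]
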